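/- arXiv:1304.0376 — 10 statements merged into one kernel-verified Lean document; each statement's English description precedes it below -/
import Mathlib

section
/- Let X be a real Banach space, z* a norm-one functional on X, z in the closed unit ball of X, and η > 0 with Re z*(z) > 1 - η. Then for any k ∈ (0,1) there exist ỹ* ∈ X* and ỹ in the unit sphere of X such that ‖ỹ*‖ = ỹ*(ỹ), ‖z - ỹ‖ < η/k, and ‖z* - ỹ*‖ < k. -/
theorem ekeland_ball {X : Type*} [NormedAddCommGroup X] [NormedSpace ℝ X] [CompleteSpace X]
    (φ : X →L[ℝ] ℝ) (z : X) (hz : ‖z‖ ≤ 1) (ε δ : ℝ) (hδ : 0 < δ)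
    (hmax : ∀ x, ‖x‖ ≤ 1 → φ x ≤ φ z + ε) :
    ∃ y, ‖y‖ ≤ 1 ∧ φ z ≤ φ y ∧ δ * ‖y - z‖ ≤ ε ∧
      ∀ x, ‖x‖ ≤ 1 → φ y + δ * ‖x - y‖ ≤ φ x → x = y := by
  classical
  set F : X → Set X := fun p => {w | ‖w‖ ≤ 1 ∧ φ p + δ * ‖w - p‖ ≤ φ w} with hF
  have hFself : ∀ p, ‖p‖ ≤ 1 → p ∈ F p := by
    intro p hp; refine ⟨hp, ?_⟩; simp
  have hFtrans : ∀ p w v, w ∈ F p → v ∈ F w → v ∈ F p := by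
    rintro p w v ⟨hw1, hw2⟩ ⟨hv1, hv2⟩
    refine ⟨hv1, ?_⟩
    have h3 : ‖v - p‖ ≤ ‖v - w‖ + ‖w - p‖ := norm_sub_le_norm_sub_add_norm_sub v w p
    nlinarith
  have hbdd : ∀ p : X, BddAbove (φ '' F p) := by
    intro p
    refine ⟨‖φ‖, ?_⟩
    rintro a ⟨w, hw, rfl⟩
    calc φ w ≤ |φ w| := le_abs_self _
      _ ≤ ‖φ‖ * ‖w‖ := φ.le_opNorm w
      _ ≤ ‖φ‖ * 1 := by nlinarith [hw.1, norm_nonneg φ]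
      _ = ‖φ‖ := mul_one _
  have hstep : ∀ (n : ℕ) (p : X), ∃ w, ‖p‖ ≤ 1 →
      (w ∈ F p ∧ sSup (φ '' F p) ≤ φ w + (2:ℝ)⁻¹ ^ n) := by
    intro n p
    by_cases hp : ‖p‖ ≤ 1
    · have hne : (φ '' F p).Nonempty := ⟨φ p, p, hFself p hp, rfl⟩
      have hlt : sSup (φ '' F p) - (2:ℝ)⁻¹ ^ n < sSup (φ '' F p) := by
        have : (0:ℝ) < (2:ℝ)⁻¹ ^ n := by positivity
        linarith
      obtain ⟨a, ⟨w, hw, rfl⟩, ha⟩ := exists_lt_of_lt_csSup hne hlt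
      exact ⟨w, fun _ => ⟨hw, by linarith⟩⟩
    · exact ⟨0, fun h => absurd h hp⟩
  set u : ℕ → X := fun n => Nat.rec z (fun n p => Classical.choose (hstep n p)) n with hu
  have husucc : ∀ n, u (n + 1) = Classical.choose (hstep n (u n)) := fun n => rfl
  have hball : ∀ n, ‖u n‖ ≤ 1 := by
    intro n
    induction n with
    | zero => exact hz
    | succ n ih =>
      rw [husucc n]
      exact ((Classical.choose_spec (hstep n (u n))) ih).1.1
  have hmem : ∀ n, u (n + 1) ∈ F (u n) := by
    intro n; rw [husucc n]
    exact ((Classical.choose_spec (hstep n (u n))) (hball n)).1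
  have hsup : ∀ n, sSup (φ '' F (u n)) ≤ φ (u (n + 1)) + (2:ℝ)⁻¹ ^ n := by
    intro n; rw [husucc n]
    exact ((Classical.choose_spec (hstep n (u n))) (hball n)).2
  have hchain : ∀ n m, n ≤ m → u m ∈ F (u n) := by
    intro n m h
    induction m, h using Nat.le_induction with
    | base => exact hFself _ (hball n)
    | succ m hm ih => exact hFtrans _ _ _ ih (hmem m)
  have hmono : Monotone fun n => φ (u n) := by
    apply monotone_nat_of_le_succ
    intro n
    have h := (hmem n).2
    nlinarith [norm_nonneg (u (n+1) - u n)]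
  have haconv : CauchySeq fun n => φ (u n) := by
    have hb : BddAbove (Set.range fun n => φ (u n)) := by
      refine ⟨‖φ‖, ?_⟩
      rintro a ⟨n, rfl⟩
      calc φ (u n) ≤ |φ (u n)| := le_abs_self _
        _ ≤ ‖φ‖ * ‖u n‖ := φ.le_opNorm _
        _ ≤ ‖φ‖ * 1 := by nlinarith [hball n, norm_nonneg φ]
        _ = ‖φ‖ := mul_one _
    exact (tendsto_atTop_ciSup hmono hb).cauchySeq
  have hd : ∀ n m, dist (u n) (u m) ≤ dist (φ (u n)) (φ (u m)) / δ := by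
    have base : ∀ n m, n ≤ m → dist (u n) (u m) ≤ dist (φ (u n)) (φ (u m)) / δ := by
      intro n m h
      have h1 := (hchain n m h).2
      rw [dist_eq_norm, Real.dist_eq, norm_sub_rev, le_div_iff₀ hδ]
      have habs : φ (u m) - φ (u n) ≤ |φ (u n) - φ (u m)| := by
        rw [abs_sub_comm]; exact le_abs_self _
      nlinarith
    intro n m
    rcases le_total n m with h | h
    · exact base n m h
    · rw [dist_comm, dist_comm (φ (u n))]; exact base m n h
  have hcau : CauchySeq u := by
    rw [Metric.cauchySeq_iff]
    intro ε' hε'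
    rw [Metric.cauchySeq_iff] at haconv
    obtain ⟨N, hN⟩ := haconv (δ * ε') (by positivity)
    refine ⟨N, fun m hm n hn => ?_⟩
    calc dist (u m) (u n) ≤ dist (φ (u m)) (φ (u n)) / δ := hd m n
      _ < ε' := by rw [div_lt_iff₀ hδ]; linarith [hN m hm n hn]
  obtain ⟨y, hy⟩ := cauchySeq_tendsto_of_complete hcau
  have hyball : ‖y‖ ≤ 1 := le_of_tendsto hy.norm (Filter.Eventually.of_forall hball)
  have hφy : Filter.Tendsto (fun n => φ (u n)) Filter.atTop (nhds (φ y)) :=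
    (φ.continuous.tendsto y).comp hy
  have hyF : ∀ n, y ∈ F (u n) := by
    intro n
    refine ⟨hyball, ?_⟩
    have t1 : Filter.Tendsto (fun m => φ (u n) + δ * ‖u m - u n‖) Filter.atTop
        (nhds (φ (u n) + δ * ‖y - u n‖)) :=
      tendsto_const_nhds.add (tendsto_const_nhds.mul ((hy.sub tendsto_const_nhds).norm))
    refine le_of_tendsto_of_tendsto t1 hφy ?_
    filter_upwards [Filter.eventually_ge_atTop n] with m hm
    exact (hchain n m hm).2
  refine ⟨y, hyball, ?_, ?_, ?_⟩
  · have h1 := (hyF 0).2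
    rw [show u 0 = z from rfl] at h1
    nlinarith [norm_nonneg (y - z)]
  · have h1 := (hyF 0).2
    rw [show u 0 = z from rfl] at h1
    have h2 := hmax y hyball
    nlinarith [norm_nonneg (y - z)]
  · intro x hx hxy
    have hxFn : ∀ n, x ∈ F (u n) := fun n => hFtrans _ _ _ (hyF n) ⟨hx, hxy⟩
    have h1 : ∀ n, φ x ≤ φ (u (n + 1)) + (2:ℝ)⁻¹ ^ n := fun n =>
      le_trans (le_csSup (hbdd (u n)) ⟨x, hxFn n, rfl⟩) (hsup n)
    have t2 : Filter.Tendsto (fun n => φ (u (n + 1)) + (2:ℝ)⁻¹ ^ n) Filter.atTop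
        (nhds (φ y + 0)) := by
      refine Filter.Tendsto.add ?_ ?_
      · exact hφy.comp (Filter.tendsto_add_atTop_nat 1)
      · exact tendsto_pow_atTop_nhds_zero_of_lt_one (by norm_num) (by norm_num)
    have h2 : φ x ≤ φ y := by
      have := le_of_tendsto_of_tendsto tendsto_const_nhds t2
        (Filter.Eventually.of_forall h1)
      simpa using this
    have h3 : ‖x - y‖ ≤ 0 := by nlinarith
    have : x - y = 0 := by
      have := norm_nonneg (x - y)
      exact norm_eq_zero.mp (le_antisymm h3 this)
    exact sub_eq_zero.mp this

theorem hb_step {X : Type*} [NormedAddCommGroup X] [NormedSpace ℝ X]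
    (zstar : X →L[ℝ] ℝ) (y : X) (hy : ‖y‖ ≤ 1) (k' : ℝ) (hk' : 0 < k')
    (hsupp : ∀ x, ‖x‖ ≤ 1 → zstar x ≤ zstar y + k' * ‖x - y‖) :
    ∃ ystar : X →L[ℝ] ℝ, ‖zstar - ystar‖ ≤ k' ∧ ‖ystar‖ = ystar y := by
  classical
  set K : Set X := {v | ∃ t : ℝ, 0 ≤ t ∧ ∃ x, ‖x‖ ≤ 1 ∧ v = t • (x - y)} with hK
  have hK0 : (0 : X) ∈ K := ⟨0, le_refl 0, 0, by simp, by simp⟩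
  have hKz : ∀ v ∈ K, zstar v ≤ k' * ‖v‖ := by
    rintro v ⟨t, ht, x, hx, rfl⟩
    have h1 : zstar (x - y) ≤ k' * ‖x - y‖ := by
      have := hsupp x hx
      rw [map_sub]; linarith
    rw [map_smul, norm_smul, Real.norm_eq_abs, abs_of_nonneg ht, smul_eq_mul]
    nlinarith
  have hKadd : ∀ v₁ ∈ K, ∀ v₂ ∈ K, v₁ + v₂ ∈ K := by
    rintro v₁ ⟨t₁, ht₁, x₁, hx₁, rfl⟩ v₂ ⟨t₂, ht₂, x₂, hx₂, rfl⟩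
    rcases eq_or_lt_of_le (add_nonneg ht₁ ht₂) with h | h
    · have h1 : t₁ = 0 := by linarith
      have h2 : t₂ = 0 := by linarith
      simp [h1, h2, hK0]
    · set t := t₁ + t₂ with htdef
      have htne : t ≠ 0 := ne_of_gt h
      refine ⟨t, le_of_lt h, (t₁ / t) • x₁ + (t₂ / t) • x₂, ?_, ?_⟩
      · calc ‖(t₁ / t) • x₁ + (t₂ / t) • x₂‖ ≤ ‖(t₁ / t) • x₁‖ + ‖(t₂ / t) • x₂‖ :=
              norm_add_le _ _
          _ = (t₁ / t) * ‖x₁‖ + (t₂ / t) * ‖x₂‖ := by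
              rw [norm_smul, norm_smul, Real.norm_eq_abs, Real.norm_eq_abs,
                abs_of_nonneg (by positivity), abs_of_nonneg (by positivity)]
          _ ≤ (t₁ / t) * 1 + (t₂ / t) * 1 := by
              have h1 : 0 ≤ t₁ / t := by positivity
              have h2 : 0 ≤ t₂ / t := by positivity
              nlinarith
          _ = 1 := by field_simp; exact htdef.symm
      · have h3 : t • ((t₁ / t) • x₁ + (t₂ / t) • x₂ - y) = t₁ • x₁ + t₂ • x₂ - t • y := by
          rw [smul_sub, smul_add, smul_smul, smul_smul,
            mul_div_cancel₀ _ htne, mul_div_cancel₀ _ htne]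
        rw [h3, htdef, smul_sub, smul_sub, add_smul]
        abel
  have hKsmul : ∀ (c : ℝ), 0 ≤ c → ∀ v ∈ K, c • v ∈ K := by
    rintro c hc v ⟨t, ht, x, hx, rfl⟩
    exact ⟨c * t, mul_nonneg hc ht, x, hx, by rw [smul_smul]⟩
  set N : X → ℝ := fun v => sInf ((fun w => k' * ‖v + w‖ - zstar w) '' K) with hN
  have hNlb : ∀ v, ∀ a ∈ (fun w => k' * ‖v + w‖ - zstar w) '' K, -(k' * ‖v‖) ≤ a := by
    rintro v a ⟨w, hw, rfl⟩
    have h1 := hKz w hw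
    have h2 : ‖w‖ - ‖v + w‖ ≤ ‖v‖ := by
      have := norm_sub_norm_le w (v + w)
      have h3 : ‖w - (v + w)‖ = ‖v‖ := by rw [show w - (v + w) = -v by abel, norm_neg]
      linarith
    show -(k' * ‖v‖) ≤ k' * ‖v + w‖ - zstar w
    nlinarith [mul_le_mul_of_nonneg_left h2 hk'.le]
  have hNbdd : ∀ v, BddBelow ((fun w => k' * ‖v + w‖ - zstar w) '' K) :=
    fun v => ⟨-(k' * ‖v‖), hNlb v⟩
  have hNne : ∀ v, ((fun w => k' * ‖v + w‖ - zstar w) '' K).Nonempty :=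
    fun v => ⟨k' * ‖v + 0‖ - zstar 0, 0, hK0, rfl⟩
  have hNle : ∀ v, ∀ w ∈ K, N v ≤ k' * ‖v + w‖ - zstar w :=
    fun v w hw => csInf_le (hNbdd v) ⟨w, hw, rfl⟩
  have N_add : ∀ u v, N (u + v) ≤ N u + N v := by
    intro u v
    have key : ∀ a ∈ (fun w => k' * ‖u + w‖ - zstar w) '' K,
        ∀ b ∈ (fun w => k' * ‖v + w‖ - zstar w) '' K, N (u + v) ≤ a + b := by
      rintro a ⟨w₁, hw₁, rfl⟩ b ⟨w₂, hw₂, rfl⟩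
      calc N (u + v) ≤ k' * ‖(u + v) + (w₁ + w₂)‖ - zstar (w₁ + w₂) :=
            hNle _ _ (hKadd _ hw₁ _ hw₂)
        _ ≤ _ := by
            beta_reduce
            have h1 : (u + v) + (w₁ + w₂) = (u + w₁) + (v + w₂) := by abel
            rw [h1, map_add]
            have h2 := norm_add_le (u + w₁) (v + w₂)
            nlinarith [mul_le_mul_of_nonneg_left h2 hk'.le]
    have h1 : ∀ b ∈ (fun w => k' * ‖v + w‖ - zstar w) '' K, N (u + v) - b ≤ N u :=
      fun b hb => le_csInf (hNne u) (fun a ha => by linarith [key a ha b hb])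
    have h2 : N (u + v) - N u ≤ N v :=
      le_csInf (hNne v) (fun b hb => by linarith [h1 b hb])
    linarith
  have N_hom : ∀ c : ℝ, 0 < c → ∀ v, N (c • v) = c * N v := by
    intro c hc v
    apply le_antisymm
    · rw [← div_le_iff₀' hc]
      apply le_csInf (hNne v)
      rintro b ⟨w, hw, rfl⟩
      rw [div_le_iff₀' hc]
      calc N (c • v) ≤ k' * ‖c • v + c • w‖ - zstar (c • w) := hNle _ _ (hKsmul c hc.le w hw)
        _ = c * (k' * ‖v + w‖ - zstar w) := by
            rw [← smul_add, map_smul, norm_smul, Real.norm_eq_abs, abs_of_pos hc,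
              smul_eq_mul]
            ring
    · apply le_csInf (hNne (c • v))
      rintro a ⟨w, hw, rfl⟩
      have hw' : c⁻¹ • w ∈ K := hKsmul c⁻¹ (by positivity) w hw
      have h1 : N v ≤ k' * ‖v + c⁻¹ • w‖ - zstar (c⁻¹ • w) := hNle _ _ hw'
      have h2 : k' * ‖c • v + w‖ - zstar w = c * (k' * ‖v + c⁻¹ • w‖ - zstar (c⁻¹ • w)) := by
        have h3 : c • v + w = c • (v + c⁻¹ • w) := by
          rw [smul_add, smul_smul, mul_inv_cancel₀ (ne_of_gt hc), one_smul]
        rw [h3, map_smul, norm_smul, Real.norm_eq_abs, abs_of_pos hc, smul_eq_mul]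
        field_simp
      beta_reduce
      rw [h2]
      exact mul_le_mul_of_nonneg_left h1 hc.le
  have hN0 : 0 ≤ N 0 := by
    apply le_csInf (hNne 0)
    intro a ha
    have := hNlb 0 a ha
    simpa using this
  obtain ⟨g, -, hg⟩ := exists_extension_of_le_sublinear ⟨⊥, 0⟩ N N_hom N_add
    (by rintro ⟨x, hx⟩
        rw [Submodule.mem_bot] at hx
        subst hx
        simpa using hN0)
  have hgnorm : ∀ v, ‖g v‖ ≤ k' * ‖v‖ := by
    intro v
    rw [Real.norm_eq_abs, abs_le]
    constructor
    · have h1 := hg (-v)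
      have h2 := hNle (-v) 0 hK0
      simp only [add_zero, map_zero, sub_zero, norm_neg] at h2
      rw [map_neg] at h1
      linarith
    · have h1 := hg v
      have h2 := hNle v 0 hK0
      simp only [add_zero, map_zero, sub_zero] at h2
      linarith
  set G : X →L[ℝ] ℝ := g.mkContinuous k' hgnorm with hG
  have hGapp : ∀ v, G v = g v := fun v => rfl
  have hGnorm : ‖G‖ ≤ k' := g.mkContinuous_norm_le hk'.le hgnorm
  have hglow : ∀ w ∈ K, zstar w ≤ G w := by
    intro w hw
    have h1 := hg (-w)
    have h2 := hNle (-w) w hw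
    rw [show -w + w = 0 by abel] at h2
    simp only [norm_zero, mul_zero, zero_sub] at h2
    rw [map_neg] at h1
    rw [hGapp]
    linarith
  refine ⟨zstar - G, ?_, ?_⟩
  · rw [show zstar - (zstar - G) = G by abel]
    exact hGnorm
  · set ystar := zstar - G with hys
    have hsup2 : ∀ x, ‖x‖ ≤ 1 → ystar x ≤ ystar y := by
      intro x hx
      have hxK : x - y ∈ K := ⟨1, zero_le_one, x, hx, (one_smul _ _).symm⟩
      have h1 := hglow _ hxK
      rw [map_sub, map_sub] at h1
      simp only [hys, ContinuousLinearMap.coe_sub', Pi.sub_apply]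
      linarith
    have hys0 : 0 ≤ ystar y := by
      have := hsup2 0 (by simp)
      simpa using this
    have hle : ‖ystar‖ ≤ ystar y := by
      apply ContinuousLinearMap.opNorm_le_bound _ hys0
      intro x
      rcases eq_or_ne x 0 with rfl | hx0
      · simp
      · have hnx : (0:ℝ) < ‖x‖ := norm_pos_iff.mpr hx0
        have hx1 : ‖‖x‖⁻¹ • x‖ ≤ 1 := by
          rw [norm_smul, Real.norm_eq_abs, abs_of_pos (by positivity)]
          rw [inv_mul_cancel₀ (ne_of_gt hnx)]
        have h1 := hsup2 _ hx1
        have h2 := hsup2 (-(‖x‖⁻¹ • x)) (by rwa [norm_neg])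
        rw [map_neg] at h2
        rw [map_smul, smul_eq_mul] at h1 h2
        rw [Real.norm_eq_abs, abs_le]
        have e : ‖x‖ * ‖x‖⁻¹ = 1 := mul_inv_cancel₀ hnx.ne'
        have h1' : ystar x ≤ ‖x‖ * ystar y := by
          have h := mul_le_mul_of_nonneg_left h1 hnx.le
          have e2 : ‖x‖ * (‖x‖⁻¹ * ystar x) = ystar x := by
            rw [← mul_assoc, e, one_mul]
          rw [e2] at h
          exact h
        have h2' : -(ystar x) ≤ ‖x‖ * ystar y := by
          have h := mul_le_mul_of_nonneg_left h2 hnx.le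
          have e2 : ‖x‖ * -(‖x‖⁻¹ * ystar x) = -(ystar x) := by
            rw [mul_neg, ← mul_assoc, e, one_mul]
          rw [e2] at h
          exact h
        constructor
        · linarith
        · linarith
    have hge : ystar y ≤ ‖ystar‖ := by
      calc ystar y ≤ |ystar y| := le_abs_self _
        _ ≤ ‖ystar‖ * ‖y‖ := ystar.le_opNorm y
        _ ≤ ‖ystar‖ * 1 := by nlinarith [norm_nonneg ystar]
        _ = ‖ystar‖ := mul_one _
    exact le_antisymm hle hge

/-- Phelps' refinement of Bishop-Phelps, specialized to the unit ball. -/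
theorem phelps_refinement
    (X : Type*) [NormedAddCommGroup X] [NormedSpace ℝ X] [CompleteSpace X]
    (zstar : X →L[ℝ] ℝ) (hzstar : ‖zstar‖ = 1)
    (z : X) (hz : ‖z‖ ≤ 1)
    (η : ℝ) (hη : 0 < η) (hzz : zstar z > 1 - η)
    (k : ℝ) (hk0 : 0 < k) (hk1 : k < 1) :
    ∃ (ystar : X →L[ℝ] ℝ) (y : X), ‖y‖ = 1 ∧
      ‖ystar‖ = ystar y ∧ ‖z - y‖ < η / k ∧ ‖zstar - ystar‖ < k := by
  set η' := max (1 - zstar z) (η / 2) with hη'def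
  have hη'pos : 0 < η' := lt_of_lt_of_le (by linarith) (le_max_right (1 - zstar z) (η / 2))
  have hη'lt : η' < η := max_lt (by linarith) (by linarith)
  have h1' : 1 - η' ≤ zstar z := by
    have := le_max_left (1 - zstar z) (η / 2)
    rw [← hη'def] at this
    linarith
  set k' := k * (η' + η) / (2 * η) with hk'def
  have hk'pos : 0 < k' := by positivity
  have hk'lt : k' < k := by
    rw [hk'def, div_lt_iff₀ (by positivity)]
    nlinarith
  have hd : k' * (2 * η) = k * (η' + η) := by
    rw [hk'def]
    field_simp
  have hmax : ∀ x, ‖x‖ ≤ 1 → zstar x ≤ zstar z + η' := by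
    intro x hx
    have h := zstar.le_opNorm x
    rw [hzstar, one_mul, Real.norm_eq_abs] at h
    have h2 := le_abs_self (zstar x)
    linarith
  obtain ⟨y, hy1, hy2, hy3, hy4⟩ := ekeland_ball zstar z hz η' k' hk'pos hmax
  have hsupp : ∀ x, ‖x‖ ≤ 1 → zstar x ≤ zstar y + k' * ‖x - y‖ := by
    intro x hx
    by_cases hcase : zstar y + k' * ‖x - y‖ ≤ zstar x
    · have hxy := hy4 x hx hcase
      rw [hxy]
      simp
    · linarith [not_le.mp hcase]
  obtain ⟨ystar, hA, hB⟩ := hb_step zstar y hy1 k' hk'pos hsupp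
  have hlt : ‖zstar - ystar‖ < k := lt_of_le_of_lt hA hk'lt
  have hpos : 0 < ‖ystar‖ := by
    have h := norm_sub_norm_le zstar ystar
    rw [hzstar] at h
    linarith
  have hy1' : ‖y‖ = 1 := by
    refine le_antisymm hy1 ?_
    have hyle := ystar.le_opNorm y
    rw [Real.norm_eq_abs] at hyle
    have h2 : ‖ystar‖ ≤ |ystar y| := by rw [hB]; exact le_abs_self _
    nlinarith
  refine ⟨ystar, y, hy1', hB, ?_, hlt⟩
  rw [norm_sub_rev z y, lt_div_iff₀ hk0]
  have hn : 0 ≤ ‖y - z‖ := norm_nonneg _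
  have hm := mul_le_mul_of_nonneg_right hy3 (le_of_lt (show (0:ℝ) < 2 * η by positivity))
  nlinarith [mul_pos hη (sub_pos.mpr hη'lt), mul_pos hk0 (show (0:ℝ) < η' + η by positivity)]
end

section
/- Let X be the real two-dimensional space ℓ∞⁽²⁾ (ℝ² with the max norm) and let 0 < δ < 2. Set z = (1 - √(2δ), 1) ∈ S_X and z* = (√(2δ)/2, 1 - √(2δ)/2) ∈ S_{X*}. Then z*(z) = 1 - δ, yet there is no pair (y, y*) ∈ Π(X) with ‖z - y‖ < √(2δ) and ‖z* - y*‖ < √(2δ). -/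
/-- The functional on ℓ∞⁽²⁾ given by `v ↦ a * v 0 + b * v 1`. -/
noncomputable def dualFunctional (a b : ℝ) : (Fin 2 → ℝ) →L[ℝ] ℝ :=
  LinearMap.toContinuousLinearMap
    (a • (LinearMap.proj 0 : ((i : Fin 2) → ℝ) →ₗ[ℝ] ℝ) +
     b • (LinearMap.proj 1 : ((i : Fin 2) → ℝ) →ₗ[ℝ] ℝ))

lemma dualFunctional_apply (a b : ℝ) (v : Fin 2 → ℝ) :
    dualFunctional a b v = a * v 0 + b * v 1 := by
  simp [dualFunctional]

lemma pi2_norm_le {v : Fin 2 → ℝ} {c : ℝ} (hc : 0 ≤ c) (h0 : |v 0| ≤ c) (h1 : |v 1| ≤ c) :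
    ‖v‖ ≤ c := by
  apply (pi_norm_le_iff_of_nonneg hc).mpr
  intro i; fin_cases i <;> simpa [Real.norm_eq_abs]

lemma pi2_coord_le (v : Fin 2 → ℝ) (i : Fin 2) : |v i| ≤ ‖v‖ := by
  simpa [Real.norm_eq_abs] using norm_le_pi_norm v i

lemma dual_apply (f : (Fin 2 → ℝ) →L[ℝ] ℝ) (v : Fin 2 → ℝ) :
    f v = v 0 * f ![1,0] + v 1 * f ![0,1] := by
  have hv : v = v 0 • ![(1:ℝ),0] + v 1 • ![0,1] := by
    funext i; fin_cases i <;> simp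
  have h := congrArg f hv
  rw [map_add, map_smul, map_smul, smul_eq_mul, smul_eq_mul] at h
  exact h

lemma dual_norm_lower (f : (Fin 2 → ℝ) →L[ℝ] ℝ) :
    |f ![1,0]| + |f ![0,1]| ≤ ‖f‖ := by
  set a := f ![(1:ℝ),0] with ha
  set b := f ![(0:ℝ),1] with hb
  set sa : ℝ := if 0 ≤ a then 1 else -1 with hsa
  set sb : ℝ := if 0 ≤ b then 1 else -1 with hsb
  have hwa : |(![sa, sb] : Fin 2 → ℝ) 0| ≤ 1 := by
    simp [hsa]; split <;> norm_num
  have hwb : |(![sa, sb] : Fin 2 → ℝ) 1| ≤ 1 := by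
    simp [hsb]; split <;> norm_num
  have hw : ‖(![sa, sb] : Fin 2 → ℝ)‖ ≤ 1 := pi2_norm_le one_pos.le hwa hwb
  have hfw : f ![sa, sb] = |a| + |b| := by
    rw [dual_apply]
    simp only [Matrix.cons_val_zero, Matrix.cons_val_one, Matrix.head_cons, ← ha, ← hb]
    rw [hsa, hsb]
    rcases le_or_gt 0 a with h | h <;> rcases le_or_gt 0 b with h' | h' <;>
      simp [h, h', not_le.mpr, abs_of_nonneg, abs_of_neg]
  calc |a| + |b| = f ![sa, sb] := hfw.symm
    _ ≤ |f ![sa, sb]| := le_abs_self _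
    _ = ‖f ![sa, sb]‖ := (Real.norm_eq_abs _).symm
    _ ≤ ‖f‖ * ‖(![sa, sb] : Fin 2 → ℝ)‖ := f.le_opNorm _
    _ ≤ ‖f‖ * 1 := by nlinarith [norm_nonneg f]
    _ = ‖f‖ := mul_one _

/-- Sharpness of the √(2δ) bound in the space ℓ∞⁽²⁾. -/
theorem sharpness_linf2 (δ : ℝ) (hδ0 : 0 < δ) (hδ2 : δ < 2) :
    let z : Fin 2 → ℝ := ![1 - Real.sqrt (2 * δ), 1]
    let zstar : (Fin 2 → ℝ) →L[ℝ] ℝ :=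
      dualFunctional (Real.sqrt (2 * δ) / 2) (1 - Real.sqrt (2 * δ) / 2)
    ‖z‖ = 1 ∧ ‖zstar‖ = 1 ∧ zstar z = 1 - δ ∧
      ¬ ∃ (y : Fin 2 → ℝ) (ystar : (Fin 2 → ℝ) →L[ℝ] ℝ),
          ‖y‖ = 1 ∧ ‖ystar‖ = 1 ∧ ystar y = 1 ∧
          ‖z - y‖ < Real.sqrt (2 * δ) ∧ ‖zstar - ystar‖ < Real.sqrt (2 * δ) := by
  intro z zstar
  set s := Real.sqrt (2 * δ) with hs
  have hs0 : 0 < s := Real.sqrt_pos.mpr (by linarith)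
  have hs2 : s < 2 := by
    rw [hs]
    exact (Real.sqrt_lt' (by norm_num)).mpr (by nlinarith)
  have hss : s ^ 2 = 2 * δ := Real.sq_sqrt (by linarith)
  have hz0 : z 0 = 1 - s := by simp only [z, Matrix.cons_val_zero, hs]
  have hz1 : z 1 = 1 := by simp only [z, Matrix.cons_val_one, Matrix.head_cons, Matrix.cons_val_zero]
  refine ⟨?_, ?_, ?_, ?_⟩
  · -- ‖z‖ = 1
    apply le_antisymm
    · refine pi2_norm_le zero_le_one ?_ ?_
      · rw [hz0, abs_le]; constructor <;> linarith
      · rw [hz1]; norm_num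
    · have := pi2_coord_le z 1
      rwa [hz1, abs_one] at this
  · -- ‖zstar‖ = 1
    apply le_antisymm
    · apply ContinuousLinearMap.opNorm_le_bound _ zero_le_one
      intro v
      have h0 := pi2_coord_le v 0
      have h1 := pi2_coord_le v 1
      rw [show zstar v = dualFunctional (s/2) (1 - s/2) v from rfl, dualFunctional_apply,
        Real.norm_eq_abs, one_mul]
      have hA : |s/2 * v 0| = s/2 * |v 0| := by rw [abs_mul, abs_of_nonneg (by linarith)]
      have hB : |(1 - s/2) * v 1| = (1 - s/2) * |v 1| := by
        rw [abs_mul, abs_of_nonneg (by linarith)]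
      calc |s/2 * v 0 + (1 - s/2) * v 1| ≤ |s/2 * v 0| + |(1 - s/2) * v 1| := abs_add_le _ _
        _ = s/2 * |v 0| + (1 - s/2) * |v 1| := by rw [hA, hB]
        _ ≤ s/2 * ‖v‖ + (1 - s/2) * ‖v‖ := by
            have := norm_nonneg v; nlinarith
        _ = ‖v‖ := by ring
    · have := dual_norm_lower zstar
      rw [show zstar ![1,0] = dualFunctional (s/2) (1 - s/2) ![1,0] from rfl,
        show zstar ![0,1] = dualFunctional (s/2) (1 - s/2) ![0,1] from rfl,
        dualFunctional_apply, dualFunctional_apply] at this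
      simp only [Matrix.cons_val_zero, Matrix.cons_val_one, Matrix.head_cons] at this
      rw [abs_of_nonneg (by linarith : (0:ℝ) ≤ s/2 * 1 + (1 - s/2) * 0),
        abs_of_nonneg (by linarith : (0:ℝ) ≤ s/2 * 0 + (1 - s/2) * 1)] at this
      linarith
  · -- zstar z = 1 - δ
    rw [show zstar z = dualFunctional (s/2) (1 - s/2) z from rfl, dualFunctional_apply,
      hz0, hz1]
    nlinarith [hss]
  · rintro ⟨y, f, hy, hf, hfy, hzy, hzf⟩
    set a := f ![(1:ℝ),0] with ha
    set b := f ![(0:ℝ),1] with hb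
    have hy0 : |y 0| ≤ 1 := by have := pi2_coord_le y 0; rwa [hy] at this
    have hy1 : |y 1| ≤ 1 := by have := pi2_coord_le y 1; rwa [hy] at this
    have hdz0 : |(1 - s) - y 0| < s := by
      have h := pi2_coord_le (z - y) 0
      rw [show (z - y) 0 = z 0 - y 0 from rfl, hz0] at h
      exact lt_of_le_of_lt h hzy
    have heval : y 0 * a + y 1 * b = 1 := by rw [← dual_apply]; exact hfy
    have hab : |a| + |b| ≤ 1 := by have := dual_norm_lower f; rwa [hf] at this
    have hA : (zstar - f) ![(1:ℝ),0] = s/2 - a := by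
      rw [ContinuousLinearMap.sub_apply,
        show zstar ![(1:ℝ),0] = dualFunctional (s/2) (1 - s/2) ![1,0] from rfl,
        dualFunctional_apply]
      simp
      exact ha.symm
    have hB : (zstar - f) ![(0:ℝ),1] = (1 - s/2) - b := by
      rw [ContinuousLinearMap.sub_apply,
        show zstar ![(0:ℝ),1] = dualFunctional (s/2) (1 - s/2) ![0,1] from rfl,
        dualFunctional_apply]
      simp
      exact hb.symm
    have hd : |s/2 - a| + |(1 - s/2) - b| < s := by
      have h := dual_norm_lower (zstar - f)
      rw [hA, hB] at h
      exact lt_of_le_of_lt h hzf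
    have h1 : y 0 * a ≤ |a| := by
      calc y 0 * a ≤ |y 0 * a| := le_abs_self _
        _ = |y 0| * |a| := abs_mul _ _
        _ ≤ |a| := by nlinarith [abs_nonneg a]
    have h2 : y 1 * b ≤ |b| := by
      calc y 1 * b ≤ |y 1 * b| := le_abs_self _
        _ = |y 1| * |b| := abs_mul _ _
        _ ≤ |b| := by nlinarith [abs_nonneg b]
    have haeq : y 0 * a = |a| := by linarith
    have habeq : |a| + |b| = 1 := by linarith
    rcases lt_trichotomy a 0 with hA0 | hA0 | hA0
    · -- a < 0 : y 0 = -1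
      have hy0e : y 0 = -1 := by
        have h' : y 0 * a = (-1) * a := by rw [haeq, abs_of_neg hA0]; ring
        exact mul_right_cancel₀ (ne_of_lt hA0) h'
      rw [hy0e] at hdz0
      have hdz0' : 2 - s < s := by
        have : |(1 - s) - (-1)| = 2 - s := by rw [abs_of_nonneg (by linarith)]; ring_nf
        linarith [this ▸ hdz0]
      have haa : |a| = -a := abs_of_neg hA0
      have hsa : |s/2 - a| = s/2 - a := abs_of_nonneg (by linarith)
      rcases abs_cases ((1 - s/2) - b) with ⟨e1, _⟩ | ⟨e1, _⟩ <;>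
        rcases abs_cases b with ⟨e2, _⟩ | ⟨e2, _⟩ <;> linarith
    · -- a = 0
      rw [hA0] at habeq hd
      rw [abs_zero] at habeq
      rcases abs_cases ((1 - s/2) - b) with ⟨e1, _⟩ | ⟨e1, _⟩ <;>
        rcases abs_cases b with ⟨e2, _⟩ | ⟨e2, _⟩ <;>
        rcases abs_cases (s/2 - 0) with ⟨e3, _⟩ | ⟨e3, _⟩ <;> linarith
    · -- a > 0 : y 0 = 1
      have hy0e : y 0 = 1 := by
        have h' : y 0 * a = 1 * a := by rw [haeq, abs_of_pos hA0]; ring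
        exact mul_right_cancel₀ (ne_of_gt hA0) h'
      rw [hy0e] at hdz0
      have : |(1 - s) - 1| = s := by rw [show (1 - s) - 1 = -s by ring, abs_neg, abs_of_pos hs0]
      linarith [this ▸ hdz0]
end

section
/- Let X be a real Banach space. For every pair (x₀, x₀*) ∈ B_X × B_{X*} there exists a pair (y, y*) ∈ Π(X) with y*(x₀) + x₀*(y) ≥ 0. -/
/-- For every pair in `B_X × B_{X*}` there is a pair in `Π(X)` with
`y*(x₀) + x₀*(y) ≥ 0`. -/
theorem exists_Pi_pair_nonneg
    (X : Type*) [NormedAddCommGroup X] [NormedSpace ℝ X] [CompleteSpace X]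
    [Nontrivial X]
    (x₀ : X) (hx₀ : ‖x₀‖ ≤ 1)
    (x₀star : X →L[ℝ] ℝ) (hx₀star : ‖x₀star‖ ≤ 1) :
    ∃ (y : X) (ystar : X →L[ℝ] ℝ), ‖y‖ = 1 ∧ ‖ystar‖ = 1 ∧ ystar y = 1 ∧
      0 ≤ ystar x₀ + x₀star y := by
  obtain ⟨y, hy⟩ := exists_norm_eq X (le_of_lt one_pos)
  have hy0 : y ≠ 0 := by
    intro h; simp [h] at hy
  obtain ⟨g, hg1, hgy⟩ := exists_dual_vector ℝ y (norm_ne_zero_iff.mpr hy0)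
  rw [hy] at hgy
  norm_cast at hgy
  rcases le_or_gt 0 (g x₀ + x₀star y) with h | h
  · exact ⟨y, g, hy, hg1, hgy, h⟩
  · refine ⟨-y, -g, by simpa using hy, by simpa using hg1, by simpa using hgy, ?_⟩
    simp only [ContinuousLinearMap.neg_apply, map_neg]
    linarith
end

section
/- Let X be a real Banach space and 0 < δ < δ₀ ≤ 1. If (x₀, x₀*) ∈ B_X × B_{X*} satisfies x₀*(x₀) > 1 - δ₀, then the ℓ∞-distance from (x₀, x₀*) to the set A_X(δ) = {(x, x*) ∈ B_X × B_{X*} : x*(x) > 1 - δ} is at most 2(√(1-δ) - √(1-δ₀))/(1 - √(1-δ₀)). -/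
theorem keyineq (r₀ t N : ℝ) (ht0 : 0 ≤ t) (ht1 : t ≤ 1)
    (hN0 : 0 < N) (hN1 : N ≤ 1) :
    (r₀*(1-t)+t)^2 * N ≤ min 1 (N + 2*t) * ((1-t)*r₀^2 + t*N) := by
  rcases min_cases 1 (N + 2*t) with ⟨hm, _⟩ | ⟨hm, _⟩ <;> rw [hm]
  · nlinarith [mul_nonneg (mul_nonneg ht0 (by linarith : (0:ℝ) ≤ 1-t)) (sq_nonneg (1-r₀)),
      mul_nonneg (mul_nonneg (by linarith : (0:ℝ) ≤ 1-t) (sq_nonneg r₀)) (by linarith : (0:ℝ) ≤ 1-N)]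
  · have h1 : 0 ≤ t*(N - r₀*(1-t))^2 := mul_nonneg ht0 (sq_nonneg _)
    have h2 : 0 ≤ t*(r₀^2*(1-t)*(N+1+t)) :=
      mul_nonneg ht0 (mul_nonneg (mul_nonneg (sq_nonneg _) (by linarith)) (by linarith))
    have h3 : 0 ≤ t^2*N := mul_nonneg (sq_nonneg _) hN0.le
    nlinarith [h1, h2, h3]

set_option maxHeartbeats 1000000 in
set_option synthInstance.maxHeartbeats 1000000 in
/-- Distance from a point of `A_X(δ₀)` to `A_X(δ)`, case `δ, δ₀ ∈ (0,1]`.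
The product `X × X*` carries the sup (ℓ∞) metric. -/
theorem infDist_to_A_le
    (X : Type*) [NormedAddCommGroup X] [NormedSpace ℝ X] [CompleteSpace X]
    (δ δ₀ : ℝ) (hδ : 0 < δ) (hδδ₀ : δ < δ₀) (hδ₀ : δ₀ ≤ 1)
    (x₀ : X) (hx₀ : ‖x₀‖ ≤ 1)
    (x₀star : X →L[ℝ] ℝ) (hx₀star : ‖x₀star‖ ≤ 1)
    (h : x₀star x₀ > 1 - δ₀) :
    Metric.infDist (x₀, x₀star)
      {p : X × (X →L[ℝ] ℝ) | ‖p.1‖ ≤ 1 ∧ ‖p.2‖ ≤ 1 ∧ p.2 p.1 > 1 - δ} ≤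
      2 * (Real.sqrt (1 - δ) - Real.sqrt (1 - δ₀)) / (1 - Real.sqrt (1 - δ₀)) := by
  obtain ⟨r, hr_def⟩ : ∃ y : ℝ, y = Real.sqrt (1 - δ) := ⟨_, rfl⟩
  obtain ⟨r₀, hr₀_def⟩ : ∃ y : ℝ, y = Real.sqrt (1 - δ₀) := ⟨_, rfl⟩
  rw [← hr_def, ← hr₀_def]
  have hδ₀0 : 0 < δ₀ := lt_trans hδ hδδ₀
  have h1δ₀ : (0:ℝ) ≤ 1 - δ₀ := by linarith
  have h1δ : (0:ℝ) ≤ 1 - δ := by linarith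
  have hr₀sq : r₀^2 = 1 - δ₀ := by rw [hr₀_def]; exact Real.sq_sqrt h1δ₀
  have hrsq : r^2 = 1 - δ := by rw [hr_def]; exact Real.sq_sqrt h1δ
  have hr₀0 : (0:ℝ) ≤ r₀ := by rw [hr₀_def]; exact Real.sqrt_nonneg _
  have hr0 : (0:ℝ) ≤ r := by rw [hr_def]; exact Real.sqrt_nonneg _
  have hr1 : r < 1 := by nlinarith
  have hr₀r : r₀ < r := by nlinarith
  have hr₀1 : r₀ < 1 := lt_trans hr₀r hr1
  have hne : (1:ℝ) - r₀ ≠ 0 := by linarith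
  obtain ⟨t, ht_def⟩ : ∃ y : ℝ, y = (r - r₀)/(1 - r₀) := ⟨_, rfl⟩
  have ht0 : 0 < t := by rw [ht_def]; exact div_pos (by linarith) (by linarith)
  have ht1 : t < 1 := by rw [ht_def]; exact (div_lt_one (by linarith)).2 (by linarith)
  have hrt : r₀*(1-t) + t = r := by rw [ht_def]; field_simp; ring
  obtain ⟨c, hc_def⟩ : ∃ y : ℝ, y = x₀star x₀ := ⟨_, rfl⟩
  have hc : c > r₀^2 := by rw [hc_def, hr₀sq]; exact h
  obtain ⟨N, hN_def⟩ : ∃ y : ℝ, y = ‖x₀‖ := ⟨_, rfl⟩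
  have hN1 : N ≤ 1 := by rw [hN_def]; exact hx₀
  have hcN : c ≤ N := by
    rw [hc_def, hN_def]
    calc x₀star x₀ ≤ ‖x₀star‖ * ‖x₀‖ := le_trans (le_abs_self _) (x₀star.le_opNorm x₀)
      _ ≤ 1 * ‖x₀‖ := mul_le_mul_of_nonneg_right hx₀star (norm_nonneg _)
      _ = ‖x₀‖ := one_mul _
  have hN0 : 0 < N := lt_of_lt_of_le (lt_of_le_of_lt (sq_nonneg r₀) hc) hcN
  have hx₀ne : x₀ ≠ 0 := by
    intro h0
    rw [hN_def, h0, norm_zero] at hN0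
    exact lt_irrefl 0 hN0
  obtain ⟨g, hg1, hgx⟩ := exists_dual_vector ℝ x₀ (norm_ne_zero_iff.mpr hx₀ne)
  have hgx₀ : g x₀ = N := by rw [hN_def]; exact_mod_cast hgx
  obtain ⟨M, hM_def⟩ : ∃ y : ℝ, y = min 1 (N + 2*t) := ⟨_, rfl⟩
  have hMN : N ≤ M := by rw [hM_def]; exact le_min hN1 (by linarith)
  have hM1 : M ≤ 1 := by rw [hM_def]; exact min_le_left _ _
  have hM2 : M ≤ N + 2*t := by rw [hM_def]; exact min_le_right _ _
  have hM0 : 0 < M := lt_of_lt_of_le hN0 hMN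
  obtain ⟨a, ha_def⟩ : ∃ y : ℝ, y = M / N := ⟨_, rfl⟩
  have ha0 : 0 < a := by rw [ha_def]; exact div_pos hM0 hN0
  have ha1 : 1 ≤ a := by rw [ha_def]; exact (one_le_div hN0).2 hMN
  have haN : a * N = M := by rw [ha_def]; field_simp
  obtain ⟨x, hx_def⟩ : ∃ y : X, y = a • x₀ := ⟨_, rfl⟩
  obtain ⟨f, hf_def⟩ : ∃ y : X →L[ℝ] ℝ, y = (1-t) • x₀star + t • g := ⟨_, rfl⟩
  have hfx : f x = a * ((1-t)*c + t*N) := by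
    rw [hf_def, hx_def, hc_def]
    simp only [ContinuousLinearMap.add_apply, ContinuousLinearMap.coe_smul', Pi.smul_apply,
      map_smul, smul_eq_mul, hgx₀]
  have hxnorm : ‖x‖ = M := by
    rw [hx_def, norm_smul, Real.norm_of_nonneg ha0.le, ← hN_def, haN]
  have hfnorm : ‖f‖ ≤ 1 := by
    rw [hf_def]
    calc ‖(1-t) • x₀star + t • g‖ ≤ ‖(1-t) • x₀star‖ + ‖t • g‖ := norm_add_le _ _
      _ = (1-t) * ‖x₀star‖ + t * ‖g‖ := by
          rw [norm_smul (1-t) x₀star, norm_smul t g,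
            Real.norm_of_nonneg (by linarith : (0:ℝ) ≤ 1-t), Real.norm_of_nonneg ht0.le]
      _ ≤ (1-t) * 1 + t * 1 := by
          apply add_le_add
          · exact mul_le_mul_of_nonneg_left hx₀star (by linarith)
          · exact mul_le_mul_of_nonneg_left hg1.le ht0.le
      _ = 1 := by ring
  have hfx_gt : f x > 1 - δ := by
    have key := keyineq r₀ t N ht0.le ht1.le hN0 hN1
    rw [← hM_def, hrt] at key
    have h1 : r^2 ≤ a * ((1-t)*r₀^2 + t*N) := by
      rw [ha_def, div_mul_eq_mul_div, le_div_iff₀ hN0]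
      linarith
    have h2 : a * ((1-t)*r₀^2 + t*N) < a * ((1-t)*c + t*N) := by
      apply mul_lt_mul_of_pos_left _ ha0
      nlinarith
    rw [hfx, ← hrsq]
    linarith
  have hmem : (x, f) ∈ {p : X × (X →L[ℝ] ℝ) | ‖p.1‖ ≤ 1 ∧ ‖p.2‖ ≤ 1 ∧ p.2 p.1 > 1 - δ} :=
    ⟨by rw [hxnorm]; exact hM1, hfnorm, hfx_gt⟩
  have hdist : dist (x₀, x₀star) (x, f) ≤ 2 * t := by
    rw [Prod.dist_eq]
    apply max_le
    · rw [dist_eq_norm]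
      have hsub : x₀ - x = (1 - a) • x₀ := by rw [hx_def]; module
      rw [hsub, norm_smul, Real.norm_of_nonpos (by linarith : 1 - a ≤ 0), ← hN_def]
      have : -(1-a) * N = M - N := by rw [neg_sub]; linarith [haN]
      rw [this]
      linarith
    · rw [dist_eq_norm]
      have hsub : x₀star - f = t • (x₀star - g) := by rw [hf_def]; module
      rw [hsub, norm_smul t (x₀star - g), Real.norm_of_nonneg ht0.le]
      have hb : ‖x₀star - g‖ ≤ 2 := by
        calc ‖x₀star - g‖ ≤ ‖x₀star‖ + ‖g‖ := norm_sub_le _ _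
          _ ≤ 2 := by rw [hg1]; linarith
      nlinarith
  calc Metric.infDist (x₀, x₀star)
        {p : X × (X →L[ℝ] ℝ) | ‖p.1‖ ≤ 1 ∧ ‖p.2‖ ≤ 1 ∧ p.2 p.1 > 1 - δ}
        ≤ dist (x₀, x₀star) (x, f) := Metric.infDist_le_dist_of_mem hmem
    _ ≤ 2 * t := hdist
    _ = 2 * (r - r₀) / (1 - r₀) := by rw [ht_def]; ring
end

section
/- Let H be a real Hilbert space of dimension at least 2 and 0 < δ < 2. There exist x, y ∈ S_H with ⟨x, y⟩ = 1 - δ such that for every z ∈ S_H, max{‖x - z‖, ‖y - z‖} ≥ √(2 - √(4 - 2δ)). -/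
lemma exists_orthonormal_pair_aux
    (H : Type*) [NormedAddCommGroup H] [InnerProductSpace ℝ H]
    (hrank : 2 ≤ Module.rank ℝ H) :
    ∃ e₁ e₂ : H, ‖e₁‖ = 1 ∧ ‖e₂‖ = 1 ∧ (inner ℝ e₁ e₂ : ℝ) = 0 := by
  obtain ⟨f, hf⟩ := exists_linearIndependent_of_le_rank (R := ℝ) (M := H)
    (n := 2) (by exact_mod_cast hrank)
  rw [linearIndependent_fin2] at hf
  obtain ⟨h1, h2⟩ := hf
  have hu : ‖f 1‖ ≠ 0 := norm_ne_zero_iff.2 h1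
  set e₁ : H := ‖f 1‖⁻¹ • f 1 with he₁def
  have he₁ : ‖e₁‖ = 1 := by
    rw [he₁def, norm_smul, norm_inv, norm_norm, inv_mul_cancel₀ hu]
  have h11 : (inner ℝ e₁ e₁ : ℝ) = 1 := by
    rw [real_inner_self_eq_norm_sq, he₁]; norm_num
  set w : H := f 0 - (inner ℝ e₁ (f 0) : ℝ) • e₁ with hwdef
  have hw0 : w ≠ 0 := by
    intro h
    apply h2 ((inner ℝ e₁ (f 0) : ℝ) * ‖f 1‖⁻¹)
    rw [sub_eq_zero] at h
    rw [← smul_smul, ← he₁def, ← h]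
  have hwn : ‖w‖ ≠ 0 := norm_ne_zero_iff.2 hw0
  have hiw : (inner ℝ e₁ w : ℝ) = 0 := by
    rw [hwdef, inner_sub_right, real_inner_smul_right, h11]; ring
  refine ⟨e₁, ‖w‖⁻¹ • w, he₁, ?_, ?_⟩
  · rw [norm_smul, norm_inv, norm_norm, inv_mul_cancel₀ hwn]
  · rw [real_inner_smul_right, hiw, mul_zero]

/-- Spherical BPB lower bound in a real Hilbert space of dimension ≥ 2. -/
theorem hilbert_spherical_lower
    (H : Type*) [NormedAddCommGroup H] [InnerProductSpace ℝ H] [CompleteSpace H]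
    (hrank : 2 ≤ Module.rank ℝ H)
    (δ : ℝ) (hδ0 : 0 < δ) (hδ2 : δ < 2) :
    ∃ x y : H, ‖x‖ = 1 ∧ ‖y‖ = 1 ∧ (inner ℝ x y : ℝ) = 1 - δ ∧
      ∀ z : H, ‖z‖ = 1 →
        Real.sqrt (2 - Real.sqrt (4 - 2 * δ)) ≤ max ‖x - z‖ ‖y - z‖ := by
  -- get two orthonormal vectors
  obtain ⟨e₁, e₂, h1, h2, h12⟩ := exists_orthonormal_pair_aux H hrank
  have h21 : (inner ℝ e₂ e₁ : ℝ) = 0 := by rw [real_inner_comm]; exact h12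
  have h11 : (inner ℝ e₁ e₁ : ℝ) = 1 := by
    rw [real_inner_self_eq_norm_sq, h1]; norm_num
  have h22 : (inner ℝ e₂ e₂ : ℝ) = 1 := by
    rw [real_inner_self_eq_norm_sq, h2]; norm_num
  set a : ℝ := Real.sqrt (1 - δ / 2) with ha
  set b : ℝ := Real.sqrt (δ / 2) with hb
  have ha0 : 0 ≤ a := Real.sqrt_nonneg _
  have hb0 : 0 ≤ b := Real.sqrt_nonneg _
  have ha2 : a ^ 2 = 1 - δ / 2 := Real.sq_sqrt (by linarith)
  have hb2 : b ^ 2 = δ / 2 := Real.sq_sqrt (by linarith)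
  set x := a • e₁ + b • e₂ with hx
  set y := a • e₁ - b • e₂ with hy
  have innxx : (inner ℝ x x : ℝ) = 1 := by
    simp only [hx, inner_add_add_self, real_inner_smul_left, real_inner_smul_right,
      h11, h12, h21, h22]
    linear_combination ha2 + hb2
  have innyy : (inner ℝ y y : ℝ) = 1 := by
    simp only [hy, inner_sub_sub_self, real_inner_smul_left, real_inner_smul_right,
      h11, h12, h21, h22]
    linear_combination ha2 + hb2
  have hnx : ‖x‖ = 1 := by
    have := real_inner_self_eq_norm_sq x
    rw [innxx] at this
    nlinarith [norm_nonneg x]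
  have hny : ‖y‖ = 1 := by
    have := real_inner_self_eq_norm_sq y
    rw [innyy] at this
    nlinarith [norm_nonneg y]
  have innxy : (inner ℝ x y : ℝ) = 1 - δ := by
    simp only [hx, hy, inner_add_left, inner_sub_right, real_inner_smul_left,
      real_inner_smul_right, h11, h12, h21, h22]
    linear_combination ha2 - hb2
  refine ⟨x, y, hnx, hny, innxy, ?_⟩
  intro z hz
  -- key: min inner product ≤ a
  have hsum : (inner ℝ x z : ℝ) + inner ℝ y z = 2 * a * inner ℝ e₁ z := by
    simp only [hx, hy, inner_add_left, inner_sub_left, real_inner_smul_left]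
    ring
  have hcs : (inner ℝ e₁ z : ℝ) ≤ 1 := by
    have := real_inner_le_norm e₁ z
    rwa [h1, hz, one_mul] at this
  have hmin : (inner ℝ x z : ℝ) ≤ a ∨ (inner ℝ y z : ℝ) ≤ a := by
    by_contra h
    push_neg at h
    nlinarith [h.1, h.2]
  have key : ∀ w : H, ‖w‖ = 1 → (inner ℝ w z : ℝ) ≤ a →
      Real.sqrt (2 - Real.sqrt (4 - 2 * δ)) ≤ ‖w - z‖ := by
    intro w hw hwz
    have hsq : ‖w - z‖ ^ 2 = 2 - 2 * inner ℝ w z := by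
      rw [← real_inner_self_eq_norm_sq, inner_sub_sub_self,
        real_inner_self_eq_norm_sq, real_inner_self_eq_norm_sq, hw, hz,
        real_inner_comm z w]
      ring
    have h4 : Real.sqrt (4 - 2 * δ) = 2 * a := by
      rw [ha, show (4:ℝ) - 2 * δ = 2 ^ 2 * (1 - δ / 2) by ring,
        Real.sqrt_mul (by positivity), Real.sqrt_sq (by norm_num)]
    have : 2 - Real.sqrt (4 - 2 * δ) ≤ ‖w - z‖ ^ 2 := by
      rw [hsq, h4]; linarith
    calc Real.sqrt (2 - Real.sqrt (4 - 2 * δ)) ≤ Real.sqrt (‖w - z‖ ^ 2) :=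
          Real.sqrt_le_sqrt this
      _ = ‖w - z‖ := by rw [Real.sqrt_sq (norm_nonneg _)]
  rcases hmin with h | h
  · exact le_max_of_le_left (key x hnx h)
  · exact le_max_of_le_right (key y hny h)
end

section
/- Let H be a real Hilbert space and 1 < δ < 2. For any p, q ∈ B_H with ⟨p,q⟩ ≥ 1 - δ there exists z ∈ S_H such that ‖z - p‖ ≤ √δ and ‖z - q‖ ≤ √δ. -/
theorem exists_orth (H : Type*) [NormedAddCommGroup H] [InnerProductSpace ℝ H] [CompleteSpace H]
    (hrank : 2 ≤ Module.rank ℝ H) (v : H) :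
    ∃ w : H, w ≠ 0 ∧ (inner ℝ w v : ℝ) = 0 := by
  by_contra hc
  push_neg at hc
  have hbot : (ℝ ∙ v)ᗮ = ⊥ := by
    rw [Submodule.eq_bot_iff]
    intro w hw
    by_contra hw0
    exact hc w hw0 (by
      have := Submodule.mem_orthogonal_singleton_iff_inner_left.mp hw
      simpa [real_inner_comm] using this)
  have htop : (ℝ ∙ v) = ⊤ := by
    rwa [Submodule.orthogonal_eq_bot_iff] at hbot
  have h1 : Module.rank ℝ H ≤ 1 := by
    calc Module.rank ℝ H = Module.rank ℝ (⊤ : Submodule ℝ H) := (rank_top ℝ H).symm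
    _ = Module.rank ℝ (ℝ ∙ v) := by rw [htop]
    _ ≤ 1 := by simpa using rank_span_le (R := ℝ) ({v} : Set H)
  exact absurd (le_trans hrank h1) (by norm_num)

/-- BPB modulus upper bound √δ in a real Hilbert space of dimension ≥ 2,
for δ ∈ (1,2). -/
theorem hilbert_modulus_upper_large_delta
    (H : Type*) [NormedAddCommGroup H] [InnerProductSpace ℝ H] [CompleteSpace H]
    (hrank : 2 ≤ Module.rank ℝ H)
    (δ : ℝ) (hδ1 : 1 < δ) (hδ2 : δ < 2)
    (p q : H) (hp : ‖p‖ ≤ 1) (hq : ‖q‖ ≤ 1)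
    (h : (inner ℝ p q : ℝ) ≥ 1 - δ) :
    ∃ z : H, ‖z‖ = 1 ∧ ‖z - p‖ ≤ Real.sqrt δ ∧ ‖z - q‖ ≤ Real.sqrt δ := by
  obtain ⟨w₀, hw0, hwv⟩ := exists_orth H hrank (p - q)
  -- replace w₀ by ±w₀ so that μ ≥ 0
  obtain ⟨w, hw, hwpq, hμ⟩ : ∃ w : H, w ≠ 0 ∧ (inner ℝ w (p - q) : ℝ) = 0 ∧
      0 ≤ (inner ℝ w p : ℝ) := by
    rcases le_or_gt 0 (inner ℝ w₀ p : ℝ) with h0 | h0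
    · exact ⟨w₀, hw0, hwv, h0⟩
    · exact ⟨-w₀, neg_ne_zero.mpr hw0, by simp [hwv], by simp [inner_neg_left]; linarith⟩
  set μ : ℝ := inner ℝ w p with hμdef
  have hwq : (inner ℝ w q : ℝ) = μ := by
    have := hwpq
    rw [inner_sub_right] at this
    linarith
  have hn : (0:ℝ) < ‖w‖ ^ 2 := by
    have : 0 < ‖w‖ := norm_pos_iff.mpr hw
    positivity
  have hS : ‖p + q‖ ≤ 2 := le_trans (norm_add_le p q) (by linarith)
  set c : ℝ := ‖p + q‖ ^ 2 / 4 - 1 with hcdef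
  have hc : c ≤ 0 := by
    have h1 : ‖p + q‖ ^ 2 ≤ 4 := by nlinarith [norm_nonneg (p + q)]
    simp only [hcdef]; linarith
  set D : ℝ := μ ^ 2 - ‖w‖ ^ 2 * c with hDdef
  have hD : 0 ≤ D := by nlinarith
  have hDμ : μ ≤ Real.sqrt D := by
    have h1 : μ ^ 2 ≤ D := by nlinarith
    calc μ = Real.sqrt (μ ^ 2) := (Real.sqrt_sq hμ).symm
    _ ≤ Real.sqrt D := Real.sqrt_le_sqrt h1
  set t : ℝ := (-μ + Real.sqrt D) / ‖w‖ ^ 2 with htdef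
  have ht : 0 ≤ t := by
    apply div_nonneg _ hn.le
    linarith
  have hquad : ‖w‖ ^ 2 * t ^ 2 + 2 * μ * t + c = 0 := by
    have hs : Real.sqrt D ^ 2 = D := Real.sq_sqrt hD
    have hnt : ‖w‖ ^ 2 * t = -μ + Real.sqrt D := by
      rw [htdef]; field_simp
    have h2 : ‖w‖ ^ 2 * (‖w‖ ^ 2 * t ^ 2 + 2 * μ * t + c)
        = (‖w‖ ^ 2 * t) ^ 2 + 2 * μ * (‖w‖ ^ 2 * t) + ‖w‖ ^ 2 * c := by ring
    have h3 : (‖w‖ ^ 2 * t) ^ 2 + 2 * μ * (‖w‖ ^ 2 * t) + ‖w‖ ^ 2 * c = 0 := by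
      rw [hnt]; linear_combination hs + hDdef
    have h4 : ‖w‖ ^ 2 * (‖w‖ ^ 2 * t ^ 2 + 2 * μ * t + c) = 0 := h2.trans h3
    exact (mul_eq_zero.mp h4).resolve_left (ne_of_gt hn)
  set z : H := (2:ℝ)⁻¹ • (p + q) + t • w with hzdef
  have hip : (inner ℝ z p : ℝ) = 2⁻¹ * (‖p‖ ^ 2 + inner ℝ q p) + t * μ := by
    simp only [hzdef, inner_add_left, inner_smul_left, RCLike.conj_to_real,
      real_inner_self_eq_norm_sq]
    rfl
  have hiq : (inner ℝ z q : ℝ) = 2⁻¹ * ((inner ℝ p q : ℝ) + ‖q‖ ^ 2) + t * μ := by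
    simp only [hzdef, inner_add_left, inner_smul_left, RCLike.conj_to_real,
      real_inner_self_eq_norm_sq]
    rw [hwq]
  have hz2 : ‖z‖ ^ 2 = ‖p + q‖ ^ 2 / 4 + 2 * (t * μ) + t ^ 2 * ‖w‖ ^ 2 := by
    rw [hzdef, @norm_add_sq_real]
    simp only [norm_smul, inner_smul_left, inner_smul_right, inner_add_left,
      RCLike.conj_to_real, Real.norm_eq_abs, mul_pow, sq_abs]
    have h1 : (inner ℝ p w : ℝ) = μ := by rw [real_inner_comm]
    have h2 : (inner ℝ q w : ℝ) = μ := by rw [real_inner_comm]; exact hwq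
    rw [h1, h2]
    ring
  have h5 : ‖z‖ ^ 2 = 1 := by
    have hq' := hquad
    rw [hcdef] at hq'
    rw [hz2]; linarith
  have hz1 : ‖z‖ = 1 := by
    have h6 : Real.sqrt (‖z‖ ^ 2) = 1 := by rw [h5, Real.sqrt_one]
    rwa [Real.sqrt_sq (norm_nonneg z)] at h6
  have htμ : 0 ≤ t * μ := mul_nonneg ht hμ
  have hd1 : ‖z - p‖ ^ 2 ≤ δ := by
    have hcomm : (inner ℝ q p : ℝ) = inner ℝ p q := real_inner_comm p q
    rw [@norm_sub_sq_real, hip, h5]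
    linarith [hcomm, h, htμ]
  have hd2 : ‖z - q‖ ^ 2 ≤ δ := by
    rw [@norm_sub_sq_real, hiq, h5]
    linarith [h, htμ]
  refine ⟨z, hz1, ?_, ?_⟩
  · exact (Real.le_sqrt (norm_nonneg _) (by linarith)).mpr hd1
  · exact (Real.le_sqrt (norm_nonneg _) (by linarith)).mpr hd2
end

section
/- Let Y, Z be nontrivial real Banach spaces, X = Y ⊕₁ Z their ℓ₁-sum, and 0 < δ ≤ 1/2. There exist x₀ ∈ S_X and x₀* ∈ S_{X*} with x₀*(x₀) = 1 - δ such that for every (x, x*) ∈ Π(X), either ‖x₀ - x‖ ≥ √(2δ) or ‖x₀* - x*‖ ≥ √(2δ). -/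
set_option maxHeartbeats 1600000

open WithLp

lemma l1_prod_norm {α β : Type*} [SeminormedAddCommGroup α] [SeminormedAddCommGroup β]
    (f : WithLp 1 (α × β)) : ‖f‖ = ‖f.fst‖ + ‖f.snd‖ := by
  rw [WithLp.prod_norm_eq_add (by norm_num)]
  norm_num

/-- In an ℓ₁-sum `X = Y ⊕₁ Z` of nontrivial Banach spaces,
`Φ_X(δ) = √(2δ)` for `0 < δ ≤ 1/2`: there is a pair witnessing the worst
possible BPB behavior. -/
theorem ell1_sum_worst_modulus
    (Y Z : Type*) [NormedAddCommGroup Y] [NormedSpace ℝ Y] [CompleteSpace Y]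
    [NormedAddCommGroup Z] [NormedSpace ℝ Z] [CompleteSpace Z]
    [Nontrivial Y] [Nontrivial Z]
    (δ : ℝ) (hδ0 : 0 < δ) (hδ : δ ≤ 1 / 2) :
    ∃ (x₀ : WithLp 1 (Y × Z)) (x₀star : WithLp 1 (Y × Z) →L[ℝ] ℝ),
      ‖x₀‖ = 1 ∧ ‖x₀star‖ = 1 ∧ x₀star x₀ = 1 - δ ∧
      ∀ (x : WithLp 1 (Y × Z)) (xstar : WithLp 1 (Y × Z) →L[ℝ] ℝ),
        ‖x‖ = 1 → ‖xstar‖ = 1 → xstar x = 1 →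
        Real.sqrt (2 * δ) ≤ ‖x₀ - x‖ ∨ Real.sqrt (2 * δ) ≤ ‖x₀star - xstar‖ := by
  obtain ⟨y₀, hy₀⟩ := exists_norm_eq Y (zero_le_one)
  obtain ⟨z₀, hz₀⟩ := exists_norm_eq Z (zero_le_one)
  have hy₀0 : y₀ ≠ 0 := by intro h; rw [h, norm_zero] at hy₀; norm_num at hy₀
  have hz₀0 : z₀ ≠ 0 := by intro h; rw [h, norm_zero] at hz₀; norm_num at hz₀
  obtain ⟨f₀, hf₀, hf₀y⟩ := exists_dual_vector ℝ y₀ (norm_ne_zero_iff.mpr hy₀0)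
  obtain ⟨g₀, hg₀, hg₀z⟩ := exists_dual_vector ℝ z₀ (norm_ne_zero_iff.mpr hz₀0)
  rw [hy₀] at hf₀y
  rw [hz₀] at hg₀z
  norm_num at hf₀y hg₀z
  set t : ℝ := Real.sqrt (2 * δ) / 2 with ht
  have h2δ : (0:ℝ) ≤ 2 * δ := by linarith
  have hsq : Real.sqrt (2 * δ) ^ 2 = 2 * δ := Real.sq_sqrt h2δ
  have ht0 : 0 < t := by
    have : 0 < Real.sqrt (2 * δ) := Real.sqrt_pos.mpr (by linarith)
    positivity
  have htle : t ≤ 1 / 2 := by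
    have : Real.sqrt (2 * δ) ≤ 1 := by
      rw [show (1:ℝ) = Real.sqrt 1 by simp]
      exact Real.sqrt_le_sqrt (by linarith)
    rw [ht]; linarith
  have h2t : 2 * t = Real.sqrt (2 * δ) := by rw [ht]; ring
  have ht2 : 2 * t ^ 2 = δ := by nlinarith
  set e := WithLp.prodContinuousLinearEquiv 1 ℝ Y Z with he
  set X₀ : WithLp 1 (Y × Z) := e.symm (t • y₀, (1 - t) • z₀) with hX₀
  set F : WithLp 1 (Y × Z) →L[ℝ] ℝ :=
    (((1 - 2 * t) • f₀).comp (ContinuousLinearMap.fst ℝ Y Z)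
      + g₀.comp (ContinuousLinearMap.snd ℝ Y Z)).comp e.toContinuousLinearMap with hF
  have heSymm : ∀ p : Y × Z, e.symm p = (WithLp.equiv 1 (Y × Z)).symm p := fun _ => rfl
  have heApp : ∀ x : WithLp 1 (Y × Z), e x = WithLp.equiv 1 (Y × Z) x := fun _ => rfl
  have hX₀fst : X₀.fst = t • y₀ := by
    rw [hX₀, heSymm, WithLp.equiv_symm_apply, WithLp.toLp_fst]
  have hX₀snd : X₀.snd = (1 - t) • z₀ := by
    rw [hX₀, heSymm, WithLp.equiv_symm_apply, WithLp.toLp_snd]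
  have hFapp : ∀ x : WithLp 1 (Y × Z), F x = (1 - 2 * t) * f₀ x.fst + g₀ x.snd := by
    intro x
    rw [hF]
    simp only [ContinuousLinearMap.coe_comp', Function.comp_apply,
      ContinuousLinearMap.add_apply, ContinuousLinearMap.smul_apply, smul_eq_mul,
      ContinuousLinearEquiv.coe_coe, ContinuousLinearMap.coe_fst',
      ContinuousLinearMap.coe_snd', heApp, WithLp.equiv_apply, WithLp.ofLp_fst, WithLp.ofLp_snd]
  clear_value X₀ F e
  have hXnorm : ‖X₀‖ = 1 := by
    rw [l1_prod_norm, hX₀fst, hX₀snd, norm_smul, norm_smul, hy₀, hz₀]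
    rw [Real.norm_of_nonneg (le_of_lt ht0), Real.norm_of_nonneg (by linarith)]
    ring
  -- the functional values for a general pair
  have hFle : ∀ x : WithLp 1 (Y × Z), F x ≤ ‖x‖ := by
    intro x
    rw [hFapp, l1_prod_norm]
    have h1 : f₀ x.fst ≤ ‖x.fst‖ := by
      calc f₀ x.fst ≤ |f₀ x.fst| := le_abs_self _
        _ ≤ ‖f₀‖ * ‖x.fst‖ := f₀.le_opNorm _
        _ = ‖x.fst‖ := by rw [hf₀]; ring
    have h2 : g₀ x.snd ≤ ‖x.snd‖ := by
      calc g₀ x.snd ≤ |g₀ x.snd| := le_abs_self _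
        _ ≤ ‖g₀‖ * ‖x.snd‖ := g₀.le_opNorm _
        _ = ‖x.snd‖ := by rw [hg₀]; ring
    nlinarith [norm_nonneg x.fst]
  have hFnorm : ‖F‖ = 1 := by
    apply le_antisymm
    · apply ContinuousLinearMap.opNorm_le_bound _ zero_le_one
      intro x
      rw [one_mul, Real.norm_eq_abs, hFapp, l1_prod_norm]
      have hfa : |f₀ x.fst| ≤ ‖x.fst‖ := by simpa [hf₀] using f₀.le_opNorm x.fst
      have hga : |g₀ x.snd| ≤ ‖x.snd‖ := by simpa [hg₀] using g₀.le_opNorm x.snd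
      calc |(1 - 2 * t) * f₀ x.fst + g₀ x.snd|
          ≤ |(1 - 2 * t) * f₀ x.fst| + |g₀ x.snd| := abs_add_le _ _
        _ = (1 - 2 * t) * |f₀ x.fst| + |g₀ x.snd| := by
            rw [abs_mul, abs_of_nonneg (by linarith : (0:ℝ) ≤ 1 - 2 * t)]
        _ ≤ (1 - 2 * t) * ‖x.fst‖ + ‖x.snd‖ := by
            have := mul_le_mul_of_nonneg_left hfa (by linarith : (0:ℝ) ≤ 1 - 2 * t)
            linarith
        _ ≤ ‖x.fst‖ + ‖x.snd‖ := by
            nlinarith [mul_nonneg ht0.le (norm_nonneg x.fst)]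
    · have hv : ‖(WithLp.equiv 1 (Y × Z)).symm ((0 : Y), z₀)‖ = 1 := by
        rw [WithLp.equiv_symm_apply, WithLp.norm_toLp_snd, hz₀]
      have hFv : F ((WithLp.equiv 1 (Y × Z)).symm ((0 : Y), z₀)) = 1 := by
        rw [hFapp, WithLp.equiv_symm_apply, WithLp.toLp_fst, WithLp.toLp_snd]
        simp [hg₀z]
      calc (1:ℝ) = F ((WithLp.equiv 1 (Y × Z)).symm ((0 : Y), z₀)) := hFv.symm
        _ ≤ |F ((WithLp.equiv 1 (Y × Z)).symm ((0 : Y), z₀))| := le_abs_self _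
        _ ≤ ‖F‖ * ‖(WithLp.equiv 1 (Y × Z)).symm ((0 : Y), z₀)‖ := F.le_opNorm _
        _ = ‖F‖ := by rw [hv, mul_one]
  have hFX₀ : F X₀ = 1 - δ := by
    rw [hFapp, hX₀fst, hX₀snd, map_smul, map_smul, hf₀y, hg₀z]
    simp only [smul_eq_mul, mul_one]
    nlinarith
  refine ⟨X₀, F, hXnorm, hFnorm, hFX₀, ?_⟩
  intro x xstar hx hxs hxx
  set y := x.fst with hy
  set z := x.snd with hz
  have hyz : ‖y‖ + ‖z‖ = 1 := by rw [← l1_prod_norm]; exact hx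
  set yv : WithLp 1 (Y × Z) := (WithLp.equiv 1 (Y × Z)).symm (y, 0) with hyv
  set zv : WithLp 1 (Y × Z) := (WithLp.equiv 1 (Y × Z)).symm (0, z) with hzv
  have hyvnorm : ‖yv‖ = ‖y‖ := by rw [hyv, WithLp.equiv_symm_apply, WithLp.norm_toLp_fst]
  have hx2 : x = (WithLp.equiv 1 (Y × Z)).symm (y, z) := by
    apply (WithLp.equiv 1 (Y × Z)).injective
    simp only [Equiv.apply_symm_apply]
    exact Prod.ext (WithLp.ofLp_fst x) (WithLp.ofLp_snd x)
  have hsplit : x = yv + zv := by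
    rw [hx2, hyv, hzv, WithLp.equiv_symm_apply, ← WithLp.toLp_add]
    norm_num
  have hab : xstar yv + xstar zv = 1 := by rw [← map_add, ← hsplit, hxx]
  have ha : xstar yv ≤ ‖y‖ := by
    calc xstar yv ≤ |xstar yv| := le_abs_self _
      _ ≤ ‖xstar‖ * ‖yv‖ := xstar.le_opNorm _
      _ = ‖y‖ := by rw [hxs, hyvnorm, one_mul]
  have hb : xstar zv ≤ ‖z‖ := by
    calc xstar zv ≤ |xstar zv| := le_abs_self _
      _ ≤ ‖xstar‖ * ‖zv‖ := xstar.le_opNorm _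
      _ = ‖z‖ := by rw [hxs, hzv, WithLp.equiv_symm_apply, WithLp.norm_toLp_snd, one_mul]
  have ha' : xstar yv = ‖y‖ := by linarith
  by_cases hy0 : y = 0
  · left
    rw [← h2t, l1_prod_norm]
    have h1 : (X₀ - x).fst = t • y₀ := by
      rw [WithLp.sub_fst, hX₀fst, ← hy, hy0, sub_zero]
    have h2 : (X₀ - x).snd = (1 - t) • z₀ - z := by
      rw [WithLp.sub_snd, hX₀snd, ← hz]
    rw [h1, h2, norm_smul, hy₀, Real.norm_of_nonneg (le_of_lt ht0), mul_one]
    have hz1 : ‖z‖ = 1 := by rw [hy0, norm_zero] at hyz; linarith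
    have : ‖z‖ - ‖(1 - t) • z₀‖ ≤ ‖(1 - t) • z₀ - z‖ := by
      rw [norm_sub_rev]; exact norm_sub_norm_le _ _
    rw [norm_smul, hz₀, Real.norm_of_nonneg (by linarith), mul_one] at this
    linarith
  · right
    rw [← h2t]
    by_contra hcon
    push_neg at hcon
    have hyn : 0 < ‖y‖ := norm_pos_iff.mpr hy0
    have hFyv : F yv = (1 - 2 * t) * f₀ y := by
      rw [hFapp, hyv, WithLp.equiv_symm_apply, WithLp.toLp_fst, WithLp.toLp_snd]
      simp
    have hf₀y' : f₀ y ≤ ‖y‖ := by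
      calc f₀ y ≤ |f₀ y| := le_abs_self _
        _ ≤ ‖f₀‖ * ‖y‖ := f₀.le_opNorm _
        _ = ‖y‖ := by rw [hf₀, one_mul]
    have hdiff : (xstar - F) yv ≤ |(xstar - F) yv| := le_abs_self _
    have hdiff2 : |(xstar - F) yv| ≤ ‖xstar - F‖ * ‖y‖ := by
      calc |(xstar - F) yv| ≤ ‖xstar - F‖ * ‖yv‖ := (xstar - F).le_opNorm _
        _ = ‖xstar - F‖ * ‖y‖ := by rw [hyvnorm]
    have hdiff3 : ‖xstar - F‖ * ‖y‖ < 2 * t * ‖y‖ := by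
      apply mul_lt_mul_of_pos_right _ hyn
      rw [← norm_sub_rev]; exact hcon
    have key : xstar yv = F yv + (xstar - F) yv := by
      simp [ContinuousLinearMap.sub_apply]
    have h1 : F yv ≤ (1 - 2 * t) * ‖y‖ := by
      rw [hFyv]
      apply mul_le_mul_of_nonneg_left hf₀y' (by linarith)
    nlinarith [ha', key]
end

section
/- A real Banach space E contains an isometric copy of ℓ∞⁽²⁾ if and only if there exist u, v ∈ S_E with ‖u - v‖ = ‖u + v‖ = 2. -/
lemma linf2_norm_eq (x : Fin 2 → ℝ) : ‖x‖ = max |x 0| |x 1| := by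
  apply le_antisymm
  · refine (pi_norm_le_iff_of_nonneg ((abs_nonneg _).trans (le_max_left _ _))).mpr fun i => ?_
    fin_cases i <;> simp [Real.norm_eq_abs, le_max_left, le_max_right]
  · exact max_le (by simpa [Real.norm_eq_abs] using norm_le_pi_norm x 0)
      (by simpa [Real.norm_eq_abs] using norm_le_pi_norm x 1)

lemma abs_add_abs_sub (p q : ℝ) : |p + q| + |p - q| = 2 * max |p| |q| := by
  rcases abs_cases (p + q) with ⟨e1, h1⟩ | ⟨e1, h1⟩ <;>
  rcases abs_cases (p - q) with ⟨e2, h2⟩ | ⟨e2, h2⟩ <;>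
  rcases max_cases |p| |q| with ⟨e3, h3⟩ | ⟨e3, h3⟩ <;>
  rcases abs_cases p with ⟨e4, h4⟩ | ⟨e4, h4⟩ <;>
  rcases abs_cases q with ⟨e5, h5⟩ | ⟨e5, h5⟩ <;>
  rw [e1, e2, e3] <;> rw [e4, e5] at h3 <;> linarith

lemma keylow {E : Type*} [NormedAddCommGroup E] [NormedSpace ℝ E]
    (u v : E) (hu : ‖u‖ = 1) (hv : ‖v‖ = 1) (huv : ‖u + v‖ = 2)
    (s t : ℝ) (hs : 0 ≤ s) (ht : 0 ≤ t) : s + t ≤ ‖s • u + t • v‖ := by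
  rcases le_total t s with h | h
  · have e : s • u + t • v = s • (u + v) - (s - t) • v := by module
    rw [e]
    have := norm_sub_norm_le (s • (u + v)) ((s - t) • v)
    rw [norm_smul, norm_smul, hv, huv, Real.norm_of_nonneg hs,
      Real.norm_of_nonneg (by linarith)] at this
    linarith
  · have e : s • u + t • v = t • (u + v) - (t - s) • u := by module
    rw [e]
    have := norm_sub_norm_le (t • (u + v)) ((t - s) • u)
    rw [norm_smul, norm_smul, hu, huv, Real.norm_of_nonneg ht,
      Real.norm_of_nonneg (by linarith)] at this
    linarith

lemma keylow' {E : Type*} [NormedAddCommGroup E] [NormedSpace ℝ E]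
    (u v : E) (hu : ‖u‖ = 1) (hv : ‖v‖ = 1) (hsub : ‖u - v‖ = 2) (hadd : ‖u + v‖ = 2)
    (s t : ℝ) : |s| + |t| ≤ ‖s • u + t • v‖ := by
  have hvn : ‖-v‖ = 1 := by rwa [norm_neg]
  have hun : ‖-u‖ = 1 := by rwa [norm_neg]
  rcases le_total 0 s with hs | hs <;> rcases le_total 0 t with ht | ht
  · rw [abs_of_nonneg hs, abs_of_nonneg ht]
    exact keylow u v hu hv hadd s t hs ht
  · rw [abs_of_nonneg hs, abs_of_nonpos ht]
    have := keylow u (-v) hu hvn (by rwa [← sub_eq_add_neg]) s (-t) hs (by linarith)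
    rwa [smul_neg, ← neg_smul, neg_neg] at this
  · rw [abs_of_nonpos hs, abs_of_nonneg ht]
    have := keylow (-u) v hun hv (by rw [neg_add_eq_sub, ← norm_neg, neg_sub]; exact hsub)
      (-s) t (by linarith) ht
    rwa [smul_neg, ← neg_smul, neg_neg] at this
  · rw [abs_of_nonpos hs, abs_of_nonpos ht]
    have := keylow (-u) (-v) hun hvn (by rw [← neg_add, norm_neg]; exact hadd)
      (-s) (-t) (by linarith) (by linarith)
    rwa [smul_neg, smul_neg, ← neg_smul, ← neg_smul, neg_neg, neg_neg] at this

noncomputable def linf2Map {E : Type*} [NormedAddCommGroup E] [NormedSpace ℝ E] (u v : E) :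
    (Fin 2 → ℝ) →ₗ[ℝ] E where
  toFun x := ((x 0 + x 1) / 2) • u + ((x 0 - x 1) / 2) • v
  map_add' x y := by simp only [Pi.add_apply]; module
  map_smul' c x := by simp only [Pi.smul_apply, smul_eq_mul, RingHom.id_apply]; module

/-- A real Banach space contains an isometric copy of `ℓ∞⁽²⁾` iff there are
unit vectors `u, v` with `‖u - v‖ = ‖u + v‖ = 2`. -/
theorem isometric_linf2_iff
    (E : Type*) [NormedAddCommGroup E] [NormedSpace ℝ E] [CompleteSpace E] :
    Nonempty ((Fin 2 → ℝ) →ₗᵢ[ℝ] E) ↔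
      ∃ u v : E, ‖u‖ = 1 ∧ ‖v‖ = 1 ∧ ‖u - v‖ = 2 ∧ ‖u + v‖ = 2 := by
  constructor
  · rintro ⟨f⟩
    refine ⟨f ![1, 1], f ![1, -1], ?_, ?_, ?_, ?_⟩
    · rw [f.norm_map, linf2_norm_eq]; norm_num
    · rw [f.norm_map, linf2_norm_eq]; norm_num
    · rw [← map_sub, f.norm_map, linf2_norm_eq]; norm_num
    · rw [← map_add, f.norm_map, linf2_norm_eq]; norm_num
  · rintro ⟨u, v, hu, hv, hsub, hadd⟩
    refine ⟨⟨linf2Map u v, ?_⟩⟩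
    intro x
    show ‖((x 0 + x 1) / 2) • u + ((x 0 - x 1) / 2) • v‖ = ‖x‖
    set s : ℝ := (x 0 + x 1) / 2 with hsdef
    set t : ℝ := (x 0 - x 1) / 2 with htdef
    have hmax : |s| + |t| = max |x 0| |x 1| := by
      rw [hsdef, htdef, abs_div, abs_div]
      have h2 := abs_add_abs_sub (x 0) (x 1)
      rw [abs_of_nonneg (by norm_num : (0:ℝ) ≤ 2)]
      linarith
    have hle : ‖s • u + t • v‖ ≤ |s| + |t| := by
      calc ‖s • u + t • v‖ ≤ ‖s • u‖ + ‖t • v‖ := norm_add_le _ _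
      _ = |s| + |t| := by rw [norm_smul, norm_smul, hu, hv, Real.norm_eq_abs,
          Real.norm_eq_abs, mul_one, mul_one]
    have hge := keylow' u v hu hv hsub hadd s t
    rw [linf2_norm_eq, ← hmax]
    linarith
end

section
/- Let X be a real Banach space, x*, y* ∈ S_{X*}, and ε > 0. If x*(w) ≤ ε/2 for every w ∈ ker y* ∩ S_X, then dist(x*, span{y*}) ≤ ε/2 and min{‖x* - y*‖, ‖x* + y*‖} ≤ ε. -/
/-- A functional vanishing on the kernel of another functional is a scalar multiple of it. -/
lemma bp_aux_smul {X : Type*} [NormedAddCommGroup X] [NormedSpace ℝ X]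
    (y z : X →L[ℝ] ℝ) (hy : y ≠ 0) (hz : ∀ w, y w = 0 → z w = 0) :
    ∃ c : ℝ, z = c • y := by
  obtain ⟨v₀, hv₀⟩ : ∃ v, y v ≠ 0 := by
    by_contra hc
    push_neg at hc
    exact hy (by ext x; simp [hc x])
  set v : X := (y v₀)⁻¹ • v₀ with hv
  have hyv : y v = 1 := by simp [hv, inv_mul_cancel₀ hv₀]
  refine ⟨z v, ?_⟩
  ext x
  have hk : y (x - y x • v) = 0 := by simp [hyv, mul_comm]
  have := hz _ hk
  simp only [map_sub, map_smul, smul_eq_mul, sub_eq_zero] at this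
  simp [this, mul_comm]

/-- Bishop-Phelps lemma: if `x*` is at most `ε/2` on the unit sphere of
`ker y*`, then `x*` is within `ε/2` of the span of `y*` and within `ε` of
`±y*`. -/
theorem bishop_phelps_kernel_lemma
    (X : Type*) [NormedAddCommGroup X] [NormedSpace ℝ X] [CompleteSpace X]
    (xstar ystar : X →L[ℝ] ℝ) (hx : ‖xstar‖ = 1) (hy : ‖ystar‖ = 1)
    (ε : ℝ) (hε : 0 < ε)
    (h : ∀ w : X, ystar w = 0 → ‖w‖ = 1 → xstar w ≤ ε / 2) :
    Metric.infDist xstar (Submodule.span ℝ {ystar} : Set (X →L[ℝ] ℝ)) ≤ ε / 2 ∧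
      min ‖xstar - ystar‖ ‖xstar + ystar‖ ≤ ε := by
  -- |x* w| ≤ (ε/2) ‖w‖ on ker y*
  have hker : ∀ w : X, ystar w = 0 → |xstar w| ≤ ε / 2 * ‖w‖ := by
    intro w hw
    rcases eq_or_ne w 0 with rfl | hw0
    · simp
    · have hnw : (0:ℝ) < ‖w‖ := norm_pos_iff.mpr hw0
      set u : X := ‖w‖⁻¹ • w with hu
      have hnu : ‖u‖ = 1 := by
        rw [hu, norm_smul, norm_inv, norm_norm, inv_mul_cancel₀ hnw.ne']
      have hyu : ystar u = 0 := by simp [hu, hw]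
      have h1 : xstar u ≤ ε / 2 := h u hyu hnu
      have h2 : xstar (-u) ≤ ε / 2 := h (-u) (by simp [hyu]) (by simp [hnu])
      rw [map_neg] at h2
      have habs : |xstar u| ≤ ε / 2 := abs_le.mpr ⟨by linarith, h1⟩
      have : xstar w = ‖w‖ * xstar u := by
        rw [hu, map_smul, smul_eq_mul, ← mul_assoc, mul_inv_cancel₀ hnw.ne', one_mul]
      rw [this, abs_mul, abs_of_pos hnw]
      calc ‖w‖ * |xstar u| ≤ ‖w‖ * (ε/2) := by
            exact mul_le_mul_of_nonneg_left habs hnw.le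
        _ = ε / 2 * ‖w‖ := by ring
  -- restrict x* to ker y* and extend by Hahn–Banach
  set K : Subspace ℝ X := LinearMap.ker (ystar : X →ₗ[ℝ] ℝ) with hK
  set f : K →L[ℝ] ℝ := xstar.comp K.subtypeL with hf
  have hfnorm : ‖f‖ ≤ ε / 2 := by
    refine ContinuousLinearMap.opNorm_le_bound _ (by linarith) ?_
    intro w
    have := hker (w : X) w.2
    calc ‖f w‖ = |xstar (w : X)| := by rw [hf]; rfl
      _ ≤ ε / 2 * ‖w‖ := this
  obtain ⟨g, hg, hgnorm⟩ := exists_extension_norm_eq K f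
  have hgle : ‖g‖ ≤ ε / 2 := hgnorm ▸ hfnorm
  have hyne : ystar ≠ 0 := fun hc => by simp [hc] at hy
  have hvanish : ∀ w, ystar w = 0 → (xstar - g) w = 0 := by
    intro w hw
    have : g w = f ⟨w, hw⟩ := hg ⟨w, hw⟩
    simp [this, hf]
  obtain ⟨c, hc⟩ := bp_aux_smul ystar (xstar - g) hyne hvanish
  have hdist : ‖xstar - c • ystar‖ ≤ ε / 2 := by
    have : xstar - c • ystar = g := by rw [← hc]; abel
    rw [this]; exact hgle
  constructor
  · have hmem : (c • ystar : X →L[ℝ] ℝ) ∈ (Submodule.span ℝ {ystar} : Set (X →L[ℝ] ℝ)) :=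
      Submodule.smul_mem _ c (Submodule.mem_span_singleton_self _)
    calc Metric.infDist xstar (Submodule.span ℝ {ystar} : Set (X →L[ℝ] ℝ))
        ≤ dist xstar (c • ystar) := Metric.infDist_le_dist_of_mem hmem
      _ = ‖xstar - c • ystar‖ := by rw [dist_eq_norm]
      _ ≤ ε / 2 := hdist
  · have habs : |(|c| - 1)| ≤ ε / 2 := by
      have : ‖c • ystar‖ = |c| := by
        rw [norm_smul ((c : ℝ)) ystar, hy, Real.norm_eq_abs, mul_one]
      have h1 := norm_sub_norm_le (xstar) (c • ystar)
      have h2 := norm_sub_norm_le (c • ystar) (xstar)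
      rw [hx, this] at h1 h2
      rw [norm_sub_rev] at h2
      exact abs_le.mpr ⟨by linarith, by linarith⟩
    rcases le_or_gt 0 c with hc0 | hc0
    · have : ‖xstar - ystar‖ ≤ ε := by
        calc ‖xstar - ystar‖ = ‖(xstar - c • ystar) + (c - 1) • ystar‖ := by
              congr 1; module
          _ ≤ ‖xstar - c • ystar‖ + ‖(c - 1) • ystar‖ := norm_add_le _ _
          _ = ‖xstar - c • ystar‖ + |c - 1| := by
              rw [norm_smul ((c - 1 : ℝ)) ystar, hy, Real.norm_eq_abs, mul_one]
          _ ≤ ε / 2 + ε / 2 := by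
              have : |c - 1| ≤ ε / 2 := by rw [abs_of_nonneg hc0] at habs; exact habs
              linarith [hdist]
          _ = ε := by ring
      exact le_trans (min_le_left _ _) this
    · have : ‖xstar + ystar‖ ≤ ε := by
        calc ‖xstar + ystar‖ = ‖(xstar - c • ystar) + (c + 1) • ystar‖ := by
              congr 1; module
          _ ≤ ‖xstar - c • ystar‖ + ‖(c + 1) • ystar‖ := norm_add_le _ _
          _ = ‖xstar - c • ystar‖ + |c + 1| := by
              rw [norm_smul ((c + 1 : ℝ)) ystar, hy, Real.norm_eq_abs, mul_one]
          _ ≤ ε / 2 + ε / 2 := by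
              have : |c + 1| ≤ ε / 2 := by
                rw [abs_of_neg hc0] at habs
                rw [abs_le] at habs ⊢
                constructor <;> linarith [habs.1, habs.2]
              linarith [hdist]
          _ = ε := by ring
      exact le_trans (min_le_right _ _) this
end

section
/- Let X be a real Banach space, x* ∈ S_{X*}, t > 1, and let K(t,x*) = {x ∈ X : ‖x‖ ≤ t·x*(x)}. Suppose y* ∈ S_{X*} satisfies y*(K(t,x*)) ⊆ [0,∞). Then x*(w) ≤ 1/t for every w ∈ ker y* ∩ S_X, and consequently min{‖x* - y*‖, ‖x* + y*‖} ≤ 2/t. -/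
/-- If `y*` is nonnegative on the Bishop-Phelps cone `K(t,x*)`, then `x*` is
at most `1/t` on the unit sphere of `ker y*` and `min{‖x*-y*‖,‖x*+y*‖} ≤ 2/t`. -/
theorem bishop_phelps_cone_lemma
    (X : Type*) [NormedAddCommGroup X] [NormedSpace ℝ X] [CompleteSpace X]
    (xstar ystar : X →L[ℝ] ℝ) (hx : ‖xstar‖ = 1) (hy : ‖ystar‖ = 1)
    (t : ℝ) (ht : 1 < t)
    (h : ∀ x : X, ‖x‖ ≤ t * xstar x → 0 ≤ ystar x) :
    (∀ w : X, ystar w = 0 → ‖w‖ = 1 → xstar w ≤ 1 / t) ∧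
      min ‖xstar - ystar‖ ‖xstar + ystar‖ ≤ 2 / t := by
  have ht0 : (0:ℝ) < t := lt_trans one_pos ht
  have hyne : ystar ≠ 0 := by
    intro h0
    rw [h0, norm_zero] at hy
    exact one_ne_zero hy.symm
  -- Part 1
  have part1 : ∀ w : X, ystar w = 0 → ‖w‖ = 1 → xstar w ≤ 1 / t := by
    intro w hw hnw
    by_contra hlt
    push_neg at hlt
    have ha : 0 < t * xstar w - 1 := by
      have := (div_lt_iff₀ ht0).mp hlt
      nlinarith
    obtain ⟨v, hv⟩ : ∃ v, ystar v < 0 := by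
      by_contra hno
      push_neg at hno
      apply hyne
      ext x
      have h1 := hno x
      have h2 := hno (-x)
      simp only [map_neg, Left.nonneg_neg_iff] at h2
      simp only [ContinuousLinearMap.zero_apply]
      linarith
    set a : ℝ := t * xstar w - 1 with hadef
    set lam : ℝ := (1 + t) * ‖v‖ / a with hlamdef
    have hlam0 : 0 ≤ lam := by positivity
    have hlama : lam * a = (1 + t) * ‖v‖ := by
      rw [hlamdef, div_mul_cancel₀ _ ha.ne']
    set x : X := v + lam • w with hxdef
    have hxn : ‖x‖ ≤ ‖v‖ + lam := by
      calc ‖x‖ ≤ ‖v‖ + ‖lam • w‖ := norm_add_le _ _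
        _ = ‖v‖ + lam := by rw [norm_smul, hnw]; simp [abs_of_nonneg hlam0]
    have hxv : -‖v‖ ≤ xstar v := by
      have := xstar.le_opNorm v
      have habs : |xstar v| ≤ ‖v‖ := by
        rw [hx] at this; simpa using this
      exact neg_le_of_abs_le habs
    have hcone : ‖x‖ ≤ t * xstar x := by
      have hxval : xstar x = xstar v + lam * xstar w := by
        simp [hxdef]
      rw [hxval]
      have : t * xstar w = 1 + a := by rw [hadef]; ring
      nlinarith
    have := h x hcone
    have hyx : ystar x = ystar v := by simp [hxdef, hw]
    rw [hyx] at this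
    linarith
  refine ⟨part1, ?_⟩
  -- Part 2
  -- First: |xstar w| ≤ (1/t) * ‖w‖ for all w in ker ystar
  have hker : ∀ w : X, ystar w = 0 → |xstar w| ≤ (1/t) * ‖w‖ := by
    intro w hw
    rcases eq_or_ne w 0 with rfl | hw0
    · simp
    · have hnw : ‖w‖ ≠ 0 := norm_ne_zero_iff.mpr hw0
      set u : X := ‖w‖⁻¹ • w with hudef
      have hun : ‖u‖ = 1 := by
        rw [hudef, norm_smul]
        simp [abs_of_nonneg (inv_nonneg.mpr (norm_nonneg w)), inv_mul_cancel₀ hnw]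
      have hyu : ystar u = 0 := by simp [hudef, hw]
      have h1 := part1 u hyu hun
      have h2 := part1 (-u) (by simp [hyu]) (by simp [hun])
      simp only [map_neg] at h2
      have habsu : |xstar u| ≤ 1 / t := abs_le.mpr ⟨by linarith, h1⟩
      have hxu : xstar w = ‖w‖ * xstar u := by
        rw [hudef, map_smul, smul_eq_mul]
        field_simp
      rw [hxu, abs_mul, abs_of_nonneg (norm_nonneg w)]
      rw [mul_comm (1/t) ‖w‖]
      exact mul_le_mul_of_nonneg_left habsu (norm_nonneg w)
  set p : Submodule ℝ X := LinearMap.ker (ystar : X →ₗ[ℝ] ℝ) with hpdef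
  set f : p →L[ℝ] ℝ := xstar.comp (Submodule.subtypeL p) with hfdef
  have hf : ‖f‖ ≤ 1 / t := by
    apply ContinuousLinearMap.opNorm_le_bound _ (by positivity)
    rintro ⟨w, hwmem⟩
    have hw : ystar w = 0 := hwmem
    calc ‖f ⟨w, hwmem⟩‖ = |xstar w| := by simp [hfdef, Real.norm_eq_abs]
      _ ≤ 1/t * ‖w‖ := hker w hw
      _ = 1/t * ‖(⟨w, hwmem⟩ : p)‖ := rfl
  obtain ⟨g, hg, hgnorm⟩ := exists_extension_norm_eq p f
  obtain ⟨x0, hx0⟩ : ∃ x0, ystar x0 ≠ 0 := by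
    by_contra hno
    push_neg at hno
    exact hyne (by ext x; simp [hno x])
  set u : X := (ystar x0)⁻¹ • x0 with hudef
  have hyu : ystar u = 1 := by
    rw [hudef, map_smul, smul_eq_mul, inv_mul_cancel₀ hx0]
  set c : ℝ := xstar u - g u with hcdef
  have hclaim : xstar - c • ystar = g := by
    ext x
    have hmem : x - ystar x • u ∈ p := by
      rw [hpdef]
      simp [LinearMap.mem_ker, map_sub, map_smul, hyu]
    have := hg ⟨x - ystar x • u, hmem⟩
    simp only [hfdef, ContinuousLinearMap.comp_apply, Submodule.subtypeL_apply] at this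
    simp only [map_sub, map_smul, smul_eq_mul] at this
    simp only [ContinuousLinearMap.sub_apply, ContinuousLinearMap.smul_apply, smul_eq_mul, hcdef]
    linarith
  have hnormc : ‖xstar - c • ystar‖ ≤ 1 / t := by
    rw [hclaim, hgnorm]; exact hf
  have hsm : ∀ r : ℝ, ‖r • ystar‖ = |r| := by
    intro r
    rw [norm_smul r ystar, hy, Real.norm_eq_abs, mul_one]
  have hcy : ‖c • ystar‖ = |c| := hsm c
  have hclb : 1 - 1/t ≤ |c| := by
    have : ‖xstar‖ - ‖xstar - c • ystar‖ ≤ ‖c • ystar‖ := by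
      have := norm_sub_norm_le xstar (c • ystar)
      have h2 := norm_add_le (xstar - c • ystar) (c • ystar)
      simp only [sub_add_cancel] at h2
      linarith
    rw [hx, hcy] at this
    linarith
  have hcub : |c| ≤ 1 + 1/t := by
    have h2 : ‖xstar - (xstar - c • ystar)‖ ≤ ‖xstar‖ + ‖xstar - c • ystar‖ :=
      norm_sub_le _ _
    have h3 : xstar - (xstar - c • ystar) = c • ystar := by ext z; simp
    rw [h3, hx, hcy] at h2
    linarith
  have htinv : 1/t < 1 := by
    rw [div_lt_one ht0]; exact ht
  have hcne : c ≠ 0 := by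
    intro h0
    rw [h0, abs_zero] at hclb
    linarith
  rcases hcne.lt_or_gt with hneg | hpos
  · -- c < 0 : bound ‖xstar + ystar‖
    have habs : |c + 1| ≤ 1/t := by
      rw [abs_of_neg hneg] at hclb hcub
      rw [abs_le]; constructor <;> linarith
    have : ‖xstar + ystar‖ ≤ 2/t := by
      have heq : xstar + ystar = (xstar - c • ystar) + (c + 1) • ystar := by
        ext x; simp; ring
      rw [heq]
      calc ‖(xstar - c • ystar) + (c + 1) • ystar‖
          ≤ ‖xstar - c • ystar‖ + ‖(c + 1) • ystar‖ := norm_add_le _ _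
        _ ≤ 1/t + |c + 1| := by rw [hsm (c+1)]; linarith
        _ ≤ 2/t := by rw [show (2:ℝ)/t = 1/t + 1/t by ring]; linarith
    exact le_trans (min_le_right _ _) this
  · -- c > 0 : bound ‖xstar - ystar‖
    have habs : |c - 1| ≤ 1/t := by
      rw [abs_of_pos hpos] at hclb hcub
      rw [abs_le]; constructor <;> linarith
    have : ‖xstar - ystar‖ ≤ 2/t := by
      have heq : xstar - ystar = (xstar - c • ystar) + (c - 1) • ystar := by
        ext x; simp; ring
      rw [heq]
      calc ‖(xstar - c • ystar) + (c - 1) • ystar‖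
          ≤ ‖xstar - c • ystar‖ + ‖(c - 1) • ystar‖ := norm_add_le _ _
        _ ≤ 1/t + |c - 1| := by rw [hsm (c-1)]; linarith
        _ ≤ 2/t := by rw [show (2:ℝ)/t = 1/t + 1/t by ring]; linarith
    exact le_trans (min_le_left _ _) this
end
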